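/- arXiv:1001.3482 — 6 statements merged into one kernel-verified Lean document; each statement's English description precedes it below -/
import Mathlib

section
/- Let X be a complex Hilbert space and let T(t), t ≥ 0, be a strongly continuous semigroup on X that is uniformly bounded, i.e. ‖T(t)‖ ≤ M for all t ≥ 0. Let D be a T-invariant subspace of X and let C : D → X be a linear map that is infinite-time admissible with constant m (that is, ∫₀^∞ ‖C T(t)x‖² dt ≤ m ‖x‖² for all x ∈ D) and commutes with the semigroup (C T(t)x = T(t) C x for all x ∈ D, t ≥ 0). Then for every t > 0 and every x ∈ D one has ‖C T(t) x‖ ≤ (M √m / √t) ‖x‖. -/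
open MeasureTheory Set

/-- Let `X` be a complex Hilbert space and `T t`, `t ≥ 0`, a strongly
continuous semigroup on `X` which is uniformly bounded by `M`. If `D` is a `T`-invariant
subspace and `C` is linear on `D`, infinite-time admissible with constant `m` and commuting
with the semigroup, then `‖C (T t x)‖ ≤ (M * √m / √t) * ‖x‖` for all `t > 0`, `x ∈ D`. -/
theorem admissible_commuting_bound
    {X : Type*} [NormedAddCommGroup X] [InnerProductSpace ℂ X] [CompleteSpace X]
    (T : ℝ → X →L[ℂ] X) (M : ℝ)
    (hT0 : T 0 = 1)
    (hTsemi : ∀ s t : ℝ, 0 ≤ s → 0 ≤ t → T (s + t) = (T s).comp (T t))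
    (hTcont : ∀ x : X, ContinuousOn (fun t => T t x) (Ici (0 : ℝ)))
    (hM : ∀ t : ℝ, 0 ≤ t → ‖T t‖ ≤ M)
    (D : Submodule ℂ X)
    (hD : ∀ t : ℝ, 0 ≤ t → ∀ x ∈ D, T t x ∈ D)
    (C : X →ₗ[ℂ] X) (m : ℝ)
    (hCmeas : ∀ x ∈ D, IntegrableOn (fun t => ‖C (T t x)‖ ^ 2) (Ioi (0 : ℝ)))
    (hCadm : ∀ x ∈ D, ∫ t in Ioi (0 : ℝ), ‖C (T t x)‖ ^ 2 ≤ m * ‖x‖ ^ 2)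
    (hCcomm : ∀ t : ℝ, 0 ≤ t → ∀ x ∈ D, C (T t x) = T t (C x)) :
    ∀ t : ℝ, 0 < t → ∀ x ∈ D, ‖C (T t x)‖ ≤ (M * Real.sqrt m / Real.sqrt t) * ‖x‖ := by
  intro t ht x hx
  by_cases hx0 : x = 0
  · simp [hx0]
  -- x ≠ 0, so M ≥ 1 and m ≥ 0
  have hxpos : 0 < ‖x‖ := norm_pos_iff.mpr hx0
  have hM1 : (1 : ℝ) ≤ M := by
    have h1 : ‖x‖ ≤ ‖T 0‖ * ‖x‖ := by
      have := (T 0).le_opNorm x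
      simpa [hT0] using this
    nlinarith [hM 0 le_rfl]
  have hMpos : 0 < M := lt_of_lt_of_le one_pos hM1
  have hint_nonneg : 0 ≤ ∫ s in Ioi (0 : ℝ), ‖C (T s x)‖ ^ 2 :=
    setIntegral_nonneg measurableSet_Ioi (fun s _ => by positivity)
  have hm : 0 ≤ m := by
    have h := hCadm x hx
    have hxn : 0 < ‖x‖ ^ 2 := pow_pos hxpos 2

    nlinarith
  -- key pointwise bound on Ioc 0 t
  have key : ∀ s ∈ Ioc (0 : ℝ) t, ‖C (T t x)‖ ^ 2 ≤ M ^ 2 * ‖C (T s x)‖ ^ 2 := by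
    intro s hs
    have hs0 : 0 ≤ s := hs.1.le
    have hts : 0 ≤ t - s := by linarith [hs.2]
    have hTsx : T s x ∈ D := hD s hs0 x hx
    have hrw : C (T t x) = T (t - s) (C (T s x)) := by
      have h1 : T t x = T (t - s) (T s x) := by
        have := hTsemi (t - s) s hts hs0
        rw [sub_add_cancel] at this
        rw [this]; rfl
      rw [h1, hCcomm (t - s) hts (T s x) hTsx]
    have hb : ‖C (T t x)‖ ≤ M * ‖C (T s x)‖ := by
      rw [hrw]
      calc ‖T (t - s) (C (T s x))‖ ≤ ‖T (t - s)‖ * ‖C (T s x)‖ :=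
            (T (t - s)).le_opNorm _
        _ ≤ M * ‖C (T s x)‖ := by
            exact mul_le_mul_of_nonneg_right (hM _ hts) (norm_nonneg _)
    nlinarith [norm_nonneg (C (T t x)), norm_nonneg (C (T s x))]
  -- integrate over Ioc 0 t
  have hIocInt : IntegrableOn (fun s => ‖C (T s x)‖ ^ 2) (Ioc (0 : ℝ) t) :=
    (hCmeas x hx).mono_set Ioc_subset_Ioi_self
  have hconstInt : IntegrableOn (fun _ : ℝ => ‖C (T t x)‖ ^ 2) (Ioc (0 : ℝ) t) :=
    integrableOn_const (by simp [Real.volume_Ioc])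
  have step1 : t * ‖C (T t x)‖ ^ 2 ≤ M ^ 2 * ∫ s in Ioc (0 : ℝ) t, ‖C (T s x)‖ ^ 2 := by
    have h1 : ∫ _ in Ioc (0 : ℝ) t, ‖C (T t x)‖ ^ 2 = t * ‖C (T t x)‖ ^ 2 := by
      rw [setIntegral_const]
      simp [Real.volume_Ioc, ENNReal.toReal_ofReal ht.le, ht.le]
    have h2 : ∫ s in Ioc (0 : ℝ) t, (‖C (T t x)‖ ^ 2 : ℝ)
        ≤ ∫ s in Ioc (0 : ℝ) t, M ^ 2 * ‖C (T s x)‖ ^ 2 :=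
      setIntegral_mono_on hconstInt (hIocInt.const_mul _) measurableSet_Ioc key
    rw [h1] at h2
    rwa [integral_const_mul] at h2
  have step2 : ∫ s in Ioc (0 : ℝ) t, ‖C (T s x)‖ ^ 2 ≤ m * ‖x‖ ^ 2 := by
    have hmono : ∫ s in Ioc (0 : ℝ) t, ‖C (T s x)‖ ^ 2
        ≤ ∫ s in Ioi (0 : ℝ), ‖C (T s x)‖ ^ 2 :=
      setIntegral_mono_set (hCmeas x hx)
        (Filter.Eventually.of_forall fun s => by positivity)
        (HasSubset.Subset.eventuallyLE Ioc_subset_Ioi_self)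
    exact hmono.trans (hCadm x hx)
  have hsq : ‖C (T t x)‖ ^ 2 ≤ (M * Real.sqrt m / Real.sqrt t * ‖x‖) ^ 2 := by
    have hrhs : (M * Real.sqrt m / Real.sqrt t * ‖x‖) ^ 2
        = M ^ 2 * m / t * ‖x‖ ^ 2 := by
      rw [mul_pow, div_pow, mul_pow, Real.sq_sqrt hm, Real.sq_sqrt ht.le]
    rw [hrhs]
    have : t * ‖C (T t x)‖ ^ 2 ≤ M ^ 2 * (m * ‖x‖ ^ 2) := by
      calc t * ‖C (T t x)‖ ^ 2 ≤ M ^ 2 * ∫ s in Ioc (0 : ℝ) t, ‖C (T s x)‖ ^ 2 := step1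
        _ ≤ M ^ 2 * (m * ‖x‖ ^ 2) := by nlinarith [step2]
    rw [div_mul_eq_mul_div, le_div_iff₀ ht]
    nlinarith
  have hrhs_nonneg : 0 ≤ M * Real.sqrt m / Real.sqrt t * ‖x‖ := by positivity
  exact (pow_le_pow_iff_left₀ (norm_nonneg _) hrhs_nonneg two_ne_zero).1 hsq
end

section
/- Let X be a complex Hilbert space, T(t), t ≥ 0, an exponentially stable strongly continuous semigroup on X, and R : X → X the bounded operator R x = ∫₀^∞ T(t)x dt. Assume R is injective, let D = range(R), and let C : D → X be a linear map such that: (i) C ∘ R : X → X is bounded, i.e. there is K with ‖C(R x)‖ ≤ K‖x‖ for all x ∈ X; (ii) C T(t)y = T(t) C y for all y ∈ D, t ≥ 0; (iii) C(R y) = R(C y) for all y ∈ D. Define the Lebesgue extension C_L by: x ∈ D(C_L) iff the limit C_L x := lim_{t↓0} (1/t) C(∫₀^t T(τ)x dτ) exists (note ∫₀^t T(τ)x dτ = R x - R(T(t)x) ∈ D). Then C_L is a closed operator: if x_n ∈ D(C_L), x_n → x in X and C_L x_n → z in X, then x ∈ D(C_L) and C_L x = z. -/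
open MeasureTheory Set Filter intervalIntegral

private lemma ftc_right_aux {X : Type*} [NormedAddCommGroup X] [NormedSpace ℝ X] [CompleteSpace X]
    (ψ : ℝ → X) (hψ : ContinuousOn ψ (Ici (0:ℝ))) {t : ℝ} (ht : 0 ≤ t) :
    Tendsto (fun h : ℝ => (1/h) • ∫ s in t..(t+h), ψ s)
      (nhdsWithin 0 (Ioi (0:ℝ))) (nhds (ψ t)) := by
  rw [Metric.tendsto_nhdsWithin_nhds]
  intro ε hε
  obtain ⟨δ, hδ, hδ'⟩ := Metric.continuousWithinAt_iff.1 (hψ t (mem_Ici.2 ht)) (ε/2) (by linarith)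
  refine ⟨δ, hδ, fun h hh hhd => ?_⟩
  have h0 : (0:ℝ) < h := hh
  have hth : t ≤ t + h := by linarith
  have hIcc : Icc t (t+h) ⊆ Ici (0:ℝ) := fun s hs => le_trans ht hs.1
  have hint : IntervalIntegrable ψ volume t (t+h) :=
    (hψ.mono (by rwa [uIcc_of_le hth])).intervalIntegrable
  have hconst : IntervalIntegrable (fun _ : ℝ => ψ t) volume t (t+h) :=
    intervalIntegrable_const
  have key : (1/h) • (∫ s in t..(t+h), ψ s) - ψ t
      = (1/h) • ∫ s in t..(t+h), (ψ s - ψ t) := by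
    rw [intervalIntegral.integral_sub hint hconst, intervalIntegral.integral_const,
      smul_sub, add_sub_cancel_left, smul_smul, one_div, inv_mul_cancel₀ (ne_of_gt h0), one_smul]
  rw [dist_eq_norm, key, norm_smul]
  have hbound : ∀ s ∈ Set.uIoc t (t+h), ‖ψ s - ψ t‖ ≤ ε/2 := by
    intro s hs
    rw [uIoc_of_le hth] at hs
    have hs0 : s ∈ Ici (0:ℝ) := le_trans ht (le_of_lt hs.1)
    have hd : dist s t < δ := by
      rw [Real.dist_eq, abs_of_nonneg (by linarith [hs.1.le] : (0:ℝ) ≤ s - t)]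
      have : |h - 0| < δ := hhd
      rw [sub_zero, abs_of_pos h0] at this
      linarith [hs.2]
    exact le_of_lt (by simpa [dist_eq_norm] using hδ' hs0 hd)
  have hnorm : ‖∫ s in t..(t+h), (ψ s - ψ t)‖ ≤ (ε/2) * |t + h - t| :=
    intervalIntegral.norm_integral_le_of_norm_le_const hbound
  rw [add_sub_cancel_left, abs_of_pos h0] at hnorm
  calc ‖(1/h : ℝ)‖ * ‖∫ s in t..(t+h), (ψ s - ψ t)‖
      ≤ ‖(1/h : ℝ)‖ * ((ε/2) * h) := by
        exact mul_le_mul_of_nonneg_left hnorm (norm_nonneg _)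
    _ = ε/2 := by
        rw [Real.norm_eq_abs, abs_of_pos (by positivity : (0:ℝ) < 1/h)]
        field_simp
    _ < ε := by linarith

private lemma shift_Ioi_aux {X : Type*} [NormedAddCommGroup X] [NormedSpace ℝ X] [CompleteSpace X]
    (g : ℝ → X) (t : ℝ) :
    ∫ τ in Ioi (0:ℝ), g (τ + t) = ∫ τ in Ioi t, g τ := by
  have h1 : ((fun x : ℝ => x + t)) ⁻¹' Ioi t = Ioi 0 := by ext τ; simp
  rw [← h1]
  exact (measurePreserving_add_right volume t).setIntegral_preimage_emb
    (MeasurableEquiv.addRight t).measurableEmbedding g (Ioi t)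

private lemma tendsto_integral_T_aux {X : Type*} [NormedAddCommGroup X] [NormedSpace ℂ X] [CompleteSpace X]
    (T : ℝ → X →L[ℂ] X) (M : ℝ)
    (hTcont : ∀ x : X, ContinuousOn (fun t => T t x) (Ici (0 : ℝ)))
    (hTbdd : ∀ t : ℝ, 0 ≤ t → ‖T t‖ ≤ M)
    {t : ℝ} (ht : 0 ≤ t) {ι : Type*} {f : Filter ι} {w : ι → X} {l : X}
    (hw : Tendsto w f (nhds l)) :
    Tendsto (fun i => ∫ s in (0:ℝ)..t, T s (w i)) f
      (nhds (∫ s in (0:ℝ)..t, T s l)) := by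
  have hii : ∀ v : X, IntervalIntegrable (fun s => T s v) volume 0 t := fun v =>
    ((hTcont v).mono (by rw [uIcc_of_le ht]; exact Icc_subset_Ici_self)).intervalIntegrable
  rw [tendsto_iff_norm_sub_tendsto_zero]
  have hbnd : ∀ i, ‖(∫ s in (0:ℝ)..t, T s (w i)) - ∫ s in (0:ℝ)..t, T s l‖
      ≤ (M * ‖w i - l‖) * |t - 0| := by
    intro i
    rw [← intervalIntegral.integral_sub (hii (w i)) (hii l)]
    refine intervalIntegral.norm_integral_le_of_norm_le_const (fun s hs => ?_)
    rw [uIoc_of_le ht] at hs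
    rw [← map_sub]
    calc ‖T s (w i - l)‖ ≤ ‖T s‖ * ‖w i - l‖ := (T s).le_opNorm _
      _ ≤ M * ‖w i - l‖ :=
          mul_le_mul_of_nonneg_right (hTbdd s hs.1.le) (norm_nonneg _)
  refine squeeze_zero (fun i => norm_nonneg _) hbnd ?_
  have : Tendsto (fun i => ‖w i - l‖) f (nhds 0) :=
    tendsto_iff_norm_sub_tendsto_zero.1 hw
  have := (this.const_mul M).mul_const |t - 0|
  simpa using this

/-- The Lebesgue extension
`C_L x = lim_{t ↓ 0} (1/t) C (∫₀^t T τ x dτ)` of an operator `C` on `D = range R`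
(`R = -A⁻¹ = ∫₀^∞ T t dt`) which commutes with the exponentially stable semigroup `T`,
commutes with `R`, and is such that `C ∘ R` is bounded, is a closed operator. -/
theorem lebesgue_extension_closed
    {X : Type*} [NormedAddCommGroup X] [InnerProductSpace ℂ X] [CompleteSpace X]
    (T : ℝ → X →L[ℂ] X) (M ω : ℝ) (hM : 1 ≤ M) (hω : 0 < ω)
    (hT0 : T 0 = 1)
    (hTsemi : ∀ s t : ℝ, 0 ≤ s → 0 ≤ t → T (s + t) = (T s).comp (T t))
    (hTcont : ∀ x : X, ContinuousOn (fun t => T t x) (Ici (0 : ℝ)))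
    (hTexp : ∀ t : ℝ, 0 ≤ t → ‖T t‖ ≤ M * Real.exp (-ω * t))
    (R : X →L[ℂ] X)
    (hR : ∀ x : X, R x = ∫ t in Ioi (0 : ℝ), T t x)
    (hRinj : Function.Injective R)
    (C : X →ₗ[ℂ] X) (K : ℝ)
    (hCR : ∀ x : X, ‖C (R x)‖ ≤ K * ‖x‖)
    (hCcomm : ∀ t : ℝ, 0 ≤ t → ∀ y ∈ Set.range R, C (T t y) = T t (C y))
    (hCRcomm : ∀ y ∈ Set.range R, C (R y) = R (C y)) :
    ∀ (u : ℕ → X) (l : ℕ → X) (x z : X),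
      (∀ n, Tendsto (fun t : ℝ => (1 / t) • C (∫ τ in (0 : ℝ)..t, T τ (u n)))
        (nhdsWithin 0 (Ioi (0 : ℝ))) (nhds (l n))) →
      Tendsto u atTop (nhds x) → Tendsto l atTop (nhds z) →
      Tendsto (fun t : ℝ => (1 / t) • C (∫ τ in (0 : ℝ)..t, T τ x))
        (nhdsWithin 0 (Ioi (0 : ℝ))) (nhds z) := by
  intro u l x z hu hux hlz
  have hM0 : (0:ℝ) ≤ M := le_trans zero_le_one hM
  -- uniform bound on ‖T t‖ for t ≥ 0
  have hMb : ∀ s : ℝ, 0 ≤ s → ‖T s‖ ≤ M := by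
    intro s hs
    refine (hTexp s hs).trans ?_
    have : Real.exp (-ω * s) ≤ 1 := Real.exp_le_one_iff.2 (by nlinarith)
    nlinarith
  -- integrability of the orbit on (0,∞)
  have hInt : ∀ v : X, IntegrableOn (fun τ => T τ v) (Ioi (0:ℝ)) volume := by
    intro v
    refine Integrable.mono' (((exp_neg_integrableOn_Ioi 0 hω).const_mul M).mul_const ‖v‖)
      (((hTcont v).mono Ioi_subset_Ici_self).aestronglyMeasurable measurableSet_Ioi) ?_
    refine (ae_restrict_iff' measurableSet_Ioi).2 (ae_of_all _ fun τ hτ => ?_)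
    calc ‖T τ v‖ ≤ ‖T τ‖ * ‖v‖ := (T τ).le_opNorm v
      _ ≤ M * Real.exp (-ω * τ) * ‖v‖ :=
          mul_le_mul_of_nonneg_right (hTexp τ (le_of_lt hτ)) (norm_nonneg v)
  -- R (T t v) = ∫_{Ioi t} T τ v  and  R (T t v) = T t (R v)
  have key3 : ∀ (v : X) (t : ℝ), 0 ≤ t → R (T t v) = ∫ τ in Ioi t, T τ v := by
    intro v t ht
    rw [hR]
    have h1 : ∫ τ in Ioi (0:ℝ), T τ (T t v) = ∫ τ in Ioi (0:ℝ), T (τ + t) v := by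
      refine setIntegral_congr_fun measurableSet_Ioi (fun τ hτ => ?_)
      rw [hTsemi τ t (le_of_lt hτ) ht]; rfl
    rw [h1, shift_Ioi_aux (fun τ => T τ v) t]
  have key3' : ∀ (v : X) (t : ℝ), 0 ≤ t → R (T t v) = T t (R v) := by
    intro v t ht
    rw [key3 v t ht, hR]
    rw [← (T t).integral_comp_comm (hInt v)]
    have h1 : ∫ τ in Ioi (0:ℝ), T t (T τ v) = ∫ τ in Ioi (0:ℝ), T (τ + t) v := by
      refine setIntegral_congr_fun measurableSet_Ioi (fun τ hτ => ?_)
      rw [add_comm, hTsemi t τ ht (le_of_lt hτ)]; rfl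
    rw [h1, shift_Ioi_aux (fun τ => T τ v) t]
  -- ∫_0^t T τ v dτ = R (v - T t v)
  have key4 : ∀ (v : X) (t : ℝ), 0 ≤ t →
      (∫ τ in (0:ℝ)..t, T τ v) = R (v - T t v) := by
    intro v t ht
    have hsplit : ∫ τ in Ioi (0:ℝ), T τ v
        = (∫ τ in Ioc (0:ℝ) t, T τ v) + ∫ τ in Ioi t, T τ v := by
      rw [← setIntegral_union (Ioc_disjoint_Ioi le_rfl) measurableSet_Ioi
        ((hInt v).mono_set Ioc_subset_Ioi_self)
        ((hInt v).mono_set (Ioi_subset_Ioi ht)), Ioc_union_Ioi_eq_Ioi ht]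
    rw [intervalIntegral.integral_of_le ht, map_sub, key3 v t ht, hR v, hsplit]
    abel
  -- the bounded operator B = C ∘ R
  set B : X →L[ℂ] X := LinearMap.mkContinuous (C ∘ₗ (R : X →ₗ[ℂ] X)) K (fun v => hCR v) with hBdef
  have hB : ∀ v : X, B v = C (R v) := fun v => rfl
  -- C (∫_0^t T τ v) = B (v - T t v)
  have keyC : ∀ (v : X) (t : ℝ), 0 ≤ t →
      C (∫ τ in (0:ℝ)..t, T τ v) = B (v - T t v) := by
    intro v t ht
    rw [key4 v t ht, hB]
  -- B commutes with T
  have keyBT : ∀ (t : ℝ), 0 ≤ t → ∀ w : X, B (T t w) = T t (B w) := by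
    intro t ht w
    rw [hB, key3' w t ht, hCcomm t ht (R w) ⟨w, rfl⟩, hB]
  -- the function ψ
  set ψ : X → ℝ → X := fun v s => B (v - T s v) with hψdef
  have hψ0 : ∀ v, ψ v 0 = 0 := by
    intro v; simp [hψdef, hT0]
  have hψcont : ∀ v, ContinuousOn (ψ v) (Ici (0:ℝ)) := by
    intro v
    exact B.continuous.comp_continuousOn (continuousOn_const.sub (hTcont v))
  have cocycle : ∀ (v : X) (s h : ℝ), 0 ≤ s → 0 ≤ h →
      ψ v (s + h) - ψ v s = T s (ψ v h) := by
    intro v s h hs hh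
    have h1 : v - T (s+h) v = (v - T s v) + T s (v - T h v) := by
      rw [hTsemi s h hs hh, map_sub]
      show v - T s (T h v) = (v - T s v) + (T s v - T s (T h v))
      abel
    simp only [hψdef]
    rw [h1, map_add, keyBT s hs]
    abel
  -- key identity: if (1/h) • ψ v h → lv then ψ v t = ∫_0^t T s lv
  have keyId : ∀ (v lv : X),
      Tendsto (fun h : ℝ => (1/h) • ψ v h) (nhdsWithin 0 (Ioi (0:ℝ))) (nhds lv) →
      ∀ t : ℝ, 0 ≤ t → ψ v t = ∫ s in (0:ℝ)..t, T s lv := by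
    intro v lv hlim t ht
    have hii : ∀ a b : ℝ, 0 ≤ a → 0 ≤ b → IntervalIntegrable (ψ v) volume a b := by
      intro a b ha hb
      refine ((hψcont v).mono ?_).intervalIntegrable
      intro s hs
      exact le_trans (le_inf ha hb) hs.1
    -- the difference quotient combination tends to ψ v t
    have hlim1 : Tendsto (fun h : ℝ => (1/h) • (∫ s in t..(t+h), ψ v s)
        - (1/h) • ∫ s in (0:ℝ)..h, ψ v s) (nhdsWithin 0 (Ioi (0:ℝ))) (nhds (ψ v t)) := by
      have h1 := ftc_right_aux (ψ v) (hψcont v) ht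
      have h2 := ftc_right_aux (ψ v) (hψcont v) (le_refl (0:ℝ))
      have h2' : Tendsto (fun h : ℝ => (1/h) • ∫ s in (0:ℝ)..h, ψ v s)
          (nhdsWithin 0 (Ioi (0:ℝ))) (nhds (ψ v 0)) := by
        simpa using h2
      have h3 := h1.sub h2'
      rw [hψ0 v, sub_zero] at h3
      exact h3
    -- for h > 0 the expression equals ∫_0^t T s ((1/h) • ψ v h)
    have heq : ∀ h : ℝ, 0 < h →
        (1/h) • (∫ s in t..(t+h), ψ v s) - (1/h) • ∫ s in (0:ℝ)..h, ψ v s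
        = ∫ s in (0:ℝ)..t, T s ((1/h) • ψ v h) := by
      intro h h0
      have hh0 : (0:ℝ) ≤ h := h0.le
      have hth : (0:ℝ) ≤ t + h := by linarith
      have hc1 := intervalIntegral.integral_add_adjacent_intervals
        (hii 0 t le_rfl ht) (hii t (t+h) ht hth)
      have hc2 := intervalIntegral.integral_add_adjacent_intervals
        (hii 0 h le_rfl hh0) (hii h (t+h) hh0 hth)
      have e1 : (∫ s in t..(t+h), ψ v s) - ∫ s in (0:ℝ)..h, ψ v s
          = (∫ s in h..(t+h), ψ v s) - ∫ s in (0:ℝ)..t, ψ v s :=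
        sub_eq_sub_iff_add_eq_add.2
          (by rw [add_comm, hc1.trans hc2.symm, add_comm])
      have e2 : (∫ s in (0:ℝ)..t, ψ v (s + h)) = ∫ s in h..(t+h), ψ v s := by
        rw [intervalIntegral.integral_comp_add_right (fun s => ψ v s) h, zero_add]
      have hint1 : IntervalIntegrable (fun s => ψ v (s + h)) volume 0 t := by
        refine (ContinuousOn.intervalIntegrable ?_)
        refine (hψcont v).comp (Continuous.continuousOn (continuous_add_right h)) ?_
        intro s hs
        rw [uIcc_of_le ht] at hs
        exact mem_Ici.2 (show (0:ℝ) ≤ s + h by linarith [hs.1])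
      have e3 : (∫ s in (0:ℝ)..t, (ψ v (s + h) - ψ v s))
          = (∫ s in (0:ℝ)..t, ψ v (s + h)) - ∫ s in (0:ℝ)..t, ψ v s :=
        intervalIntegral.integral_sub hint1 (hii 0 t le_rfl ht)
      have e4 : (∫ s in (0:ℝ)..t, (ψ v (s + h) - ψ v s))
          = ∫ s in (0:ℝ)..t, T s (ψ v h) := by
        refine intervalIntegral.integral_congr (fun s hs => ?_)
        rw [uIcc_of_le ht] at hs
        exact cocycle v s h hs.1 hh0
      rw [← smul_sub, e1, ← e2, ← e3, e4]
      rw [← intervalIntegral.integral_smul]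
      refine intervalIntegral.integral_congr (fun s hs => ?_)
      rw [(T s).map_smul_of_tower]
    have hlim2 : Tendsto (fun h : ℝ => ∫ s in (0:ℝ)..t, T s ((1/h) • ψ v h))
        (nhdsWithin 0 (Ioi (0:ℝ))) (nhds (∫ s in (0:ℝ)..t, T s lv)) :=
      tendsto_integral_T_aux T M hTcont hMb ht hlim
    refine tendsto_nhds_unique (Tendsto.congr' ?_ hlim1) hlim2
    filter_upwards [self_mem_nhdsWithin] with h hh
    exact heq h hh
  -- convert the hypotheses to ψ-form
  have hu' : ∀ n, Tendsto (fun h : ℝ => (1/h) • ψ (u n) h)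
      (nhdsWithin 0 (Ioi (0:ℝ))) (nhds (l n)) := by
    intro n
    refine Tendsto.congr' ?_ (hu n)
    filter_upwards [self_mem_nhdsWithin] with t ht
    rw [keyC (u n) t (le_of_lt ht)]
  -- the limit identity for x
  have hxid : ∀ t : ℝ, 0 ≤ t → ψ x t = ∫ s in (0:ℝ)..t, T s z := by
    intro t ht
    have h2 : Tendsto (fun n => u n - T t (u n)) atTop (nhds (x - T t x)) :=
      hux.sub (((T t).continuous.tendsto x).comp hux)
    have h1 : Tendsto (fun n => ψ (u n) t) atTop (nhds (ψ x t)) :=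
      (B.continuous.tendsto _).comp h2
    have h3 : Tendsto (fun n => ∫ s in (0:ℝ)..t, T s (l n)) atTop
        (nhds (∫ s in (0:ℝ)..t, T s z)) :=
      tendsto_integral_T_aux T M hTcont hMb ht hlz
    have h4 : (fun n => ψ (u n) t) = fun n => ∫ s in (0:ℝ)..t, T s (l n) :=
      funext fun n => keyId (u n) (l n) (hu' n) t ht
    rw [h4] at h1
    exact tendsto_nhds_unique h1 h3
  -- conclusion
  have hfinal : Tendsto (fun h : ℝ => (1/h) • ∫ s in (0:ℝ)..h, T s z)
      (nhdsWithin 0 (Ioi (0:ℝ))) (nhds z) := by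
    have h5 := ftc_right_aux (fun s => T s z) (hTcont z) (le_refl (0:ℝ))
    simp only [zero_add, hT0] at h5
    simpa using h5
  refine Tendsto.congr' ?_ hfinal
  filter_upwards [self_mem_nhdsWithin] with t ht
  rw [keyC x t (le_of_lt ht), ← hxid t (le_of_lt ht)]
end

section
/- Let X be a complex Hilbert space, T(t), t ≥ 0, an exponentially stable strongly continuous semigroup on X, and R : X → X the bounded operator R x = ∫₀^∞ T(t)x dt. Assume R is injective, let D = range(R), and let C : D → X be a linear map such that: (i) C ∘ R is bounded on X; (ii) C T(t)y = T(t) C y for all y ∈ D, t ≥ 0; (iii) C(R y) = R(C y) for all y ∈ D. For λ > 0 define R_λ x = ∫₀^∞ e^{-λ t} T(t)x dt, and assume R_λ(X) ⊆ D for every λ > 0. Define the Lambda extension C_Λ by: x ∈ D(C_Λ) iff the limit C_Λ x := lim_{λ→∞} λ C(R_λ x) exists. Then C_Λ is a closed operator: if x_n ∈ D(C_Λ), x_n → x in X and C_Λ x_n → z in X, then x ∈ D(C_Λ) and C_Λ x = z. -/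
open MeasureTheory Set Filter

-- exp integral lemmas
lemma LEaux_integral_exp_Ioi (b a : ℝ) (hb : 0 < b) :
    ∫ t in Ioi a, Real.exp (-b * t) = Real.exp (-b * a) / b := by
  have hderiv : ∀ x ∈ Ici a, HasDerivAt (fun t => -Real.exp (-b * t) / b)
      (Real.exp (-b * x)) x := by
    intro x _
    have h1 : HasDerivAt (fun t : ℝ => -b * t) (-b) x := by
      simpa using (hasDerivAt_id x).const_mul (-b)
    have h2 := (Real.hasDerivAt_exp (-b * x)).comp x h1
    have h3 := ((h2.neg).div_const b)
    refine h3.congr_deriv ?_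
    field_simp
  have hint : IntegrableOn (fun t => Real.exp (-b * t)) (Ioi a) :=
    exp_neg_integrableOn_Ioi a hb
  have htend : Tendsto (fun t => -Real.exp (-b * t) / b) atTop (nhds 0) := by
    have : Tendsto (fun t : ℝ => -b * t) atTop atBot :=
      tendsto_id.const_mul_atTop_of_neg (neg_lt_zero.2 hb)
    have := (Real.tendsto_exp_atBot.comp this)
    simpa using ((this.neg).div_const b)
  have := integral_Ioi_of_hasDerivAt_of_tendsto' hderiv hint htend
  rw [this]
  field_simp
  ring

lemma LEaux_integral_exp_Ioc (b u : ℝ) (hu : 0 ≤ u) :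
    ∫ s in Ioc 0 u, b * Real.exp (-b * s) = 1 - Real.exp (-b * u) := by
  have hderiv : ∀ x ∈ uIcc (0:ℝ) u, HasDerivAt (fun t => -Real.exp (-b * t))
      (b * Real.exp (-b * x)) x := by
    intro x _
    have h1 : HasDerivAt (fun t : ℝ => -b * t) (-b) x := by
      simpa using (hasDerivAt_id x).const_mul (-b)
    have h2 := (Real.hasDerivAt_exp (-b * x)).comp x h1
    have h3 := h2.neg
    refine h3.congr_deriv ?_
    ring
  have hcont : IntervalIntegrable (fun x => b * Real.exp (-b * x)) volume 0 u :=
    (Continuous.intervalIntegrable (by continuity) 0 u)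
  have := intervalIntegral.integral_eq_sub_of_hasDerivAt hderiv hcont
  rw [← intervalIntegral.integral_of_le hu, this]
  simp [mul_zero]
  ring

set_option linter.unusedSectionVars false

section Aux
variable {X : Type*} [NormedAddCommGroup X] [NormedSpace ℂ X] [CompleteSpace X]
  {T : ℝ → X →L[ℂ] X} {M ω : ℝ}

lemma LEaux_meas (hTcont : ∀ x : X, ContinuousOn (fun t => T t x) (Ici (0 : ℝ))) (x : X) :
    AEStronglyMeasurable (fun t => T t x) (volume.restrict (Ioi 0)) :=
  ((hTcont x).mono Ioi_subset_Ici_self).aestronglyMeasurable measurableSet_Ioi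

lemma LEaux_intexp (hω : 0 < ω)
    (hTcont : ∀ x : X, ContinuousOn (fun t => T t x) (Ici (0 : ℝ)))
    (hTexp : ∀ t : ℝ, 0 ≤ t → ‖T t‖ ≤ M * Real.exp (-ω * t))
    (lam : ℝ) (hlam : 0 ≤ lam) (x : X) :
    IntegrableOn (fun t => Real.exp (-lam * t) • T t x) (Ioi 0) := by
  have hg : IntegrableOn (fun t => M * ‖x‖ * Real.exp (-ω * t)) (Ioi 0) :=
    (exp_neg_integrableOn_Ioi 0 hω).const_mul _
  refine Integrable.mono' hg ?_ ?_
  · exact (((Real.continuous_exp.comp (continuous_const.mul continuous_id)).aestronglyMeasurable).smul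
      (LEaux_meas hTcont x))
  · filter_upwards [ae_restrict_mem measurableSet_Ioi] with t ht
    have ht0 : (0:ℝ) ≤ t := le_of_lt ht
    have h1 : ‖T t x‖ ≤ M * Real.exp (-ω * t) * ‖x‖ :=
      le_trans ((T t).le_opNorm x) (mul_le_mul_of_nonneg_right (hTexp t ht0) (norm_nonneg x))
    have h2 : Real.exp (-lam * t) ≤ 1 := by
      apply Real.exp_le_one_iff.2
      nlinarith
    calc ‖Real.exp (-lam * t) • T t x‖ = Real.exp (-lam * t) * ‖T t x‖ := by
          rw [norm_smul, Real.norm_eq_abs, abs_of_pos (Real.exp_pos _)]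
      _ ≤ 1 * (M * Real.exp (-ω * t) * ‖x‖) := by
          apply mul_le_mul h2 h1 (norm_nonneg _) zero_le_one
      _ = M * ‖x‖ * Real.exp (-ω * t) := by ring

lemma LEaux_int0 (hω : 0 < ω)
    (hTcont : ∀ x : X, ContinuousOn (fun t => T t x) (Ici (0 : ℝ)))
    (hTexp : ∀ t : ℝ, 0 ≤ t → ‖T t‖ ≤ M * Real.exp (-ω * t)) (x : X) :
    IntegrableOn (fun t => T t x) (Ioi 0) := by
  have := LEaux_intexp hω hTcont hTexp 0 le_rfl x
  simpa using this

lemma LEaux_TRcomm (hω : 0 < ω)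
    (hTsemi : ∀ s t : ℝ, 0 ≤ s → 0 ≤ t → T (s + t) = (T s).comp (T t))
    (hTcont : ∀ x : X, ContinuousOn (fun t => T t x) (Ici (0 : ℝ)))
    (hTexp : ∀ t : ℝ, 0 ≤ t → ‖T t‖ ≤ M * Real.exp (-ω * t))
    (R : X →L[ℂ] X) (hR : ∀ x : X, R x = ∫ t in Ioi (0 : ℝ), T t x)
    (t : ℝ) (ht : 0 ≤ t) (x : X) : T t (R x) = R (T t x) := by
  rw [hR x, hR (T t x), ← (T t).integral_comp_comm (LEaux_int0 hω hTcont hTexp x)]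
  refine setIntegral_congr_fun measurableSet_Ioi (fun s hs => ?_)
  have h1 : T (t + s) = (T t).comp (T s) := hTsemi t s ht (le_of_lt hs)
  have h2 : T (s + t) = (T s).comp (T t) := hTsemi s t (le_of_lt hs) ht
  have : (T t).comp (T s) x = (T s).comp (T t) x := by
    rw [← h1, ← h2, add_comm]
  simpa using this

lemma LEaux_shift (hω : 0 < ω)
    (hTsemi : ∀ s t : ℝ, 0 ≤ s → 0 ≤ t → T (s + t) = (T s).comp (T t))
    (hTcont : ∀ x : X, ContinuousOn (fun t => T t x) (Ici (0 : ℝ)))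
    (hTexp : ∀ t : ℝ, 0 ≤ t → ‖T t‖ ≤ M * Real.exp (-ω * t))
    (R : X →L[ℂ] X) (hR : ∀ x : X, R x = ∫ t in Ioi (0 : ℝ), T t x)
    (s : ℝ) (hs : 0 ≤ s) (x : X) : T s (R x) = ∫ u in Ioi s, T u x := by
  have h1 : T s (R x) = ∫ t in Ioi (0:ℝ), T s (T t x) := by
    rw [hR x]; exact ((T s).integral_comp_comm (LEaux_int0 hω hTcont hTexp x)).symm
  have h2 : ∫ t in Ioi (0:ℝ), T s (T t x) = ∫ t in Ioi (0:ℝ), T (t + s) x := by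
    refine setIntegral_congr_fun measurableSet_Ioi (fun t ht => ?_)
    rw [add_comm, hTsemi s t hs (le_of_lt ht)]; rfl
  have h3 : ∫ t in Ioi (0:ℝ), T (t + s) x = ∫ u in Ioi s, T u x := by
    rw [← integral_indicator measurableSet_Ioi, ← integral_indicator measurableSet_Ioi,
      ← integral_add_right_eq_self (fun u => (Ioi s).indicator (fun u => T u x) u) s]
    congr 1
    funext t
    by_cases ht : 0 < t
    · rw [indicator_of_mem (mem_Ioi.2 ht), indicator_of_mem]
      exact mem_Ioi.2 (by linarith)
    · rw [indicator_of_notMem (by simpa using ht), indicator_of_notMem]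
      simp only [mem_Ioi, not_lt] at ht ⊢
      linarith
  rw [h1, h2, h3]

variable {Rlam : ℝ → X → X}

lemma LEaux_Rlam_sub (hω : 0 < ω)
    (hTcont : ∀ x : X, ContinuousOn (fun t => T t x) (Ici (0 : ℝ)))
    (hTexp : ∀ t : ℝ, 0 ≤ t → ‖T t‖ ≤ M * Real.exp (-ω * t))
    (hRlam : ∀ lam : ℝ, 0 < lam → ∀ x : X,
      Rlam lam x = ∫ t in Ioi (0 : ℝ), Real.exp (-lam * t) • T t x)
    (lam : ℝ) (hlam : 0 < lam) (x y : X) :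
    Rlam lam x - Rlam lam y = Rlam lam (x - y) := by
  rw [hRlam lam hlam x, hRlam lam hlam y, hRlam lam hlam (x - y),
    ← integral_sub (LEaux_intexp hω hTcont hTexp lam hlam.le x)
      (LEaux_intexp hω hTcont hTexp lam hlam.le y)]
  congr 1
  funext t
  rw [← smul_sub, ← map_sub]

lemma LEaux_Rlam_smul_real (hω : 0 < ω)
    (hTcont : ∀ x : X, ContinuousOn (fun t => T t x) (Ici (0 : ℝ)))
    (hTexp : ∀ t : ℝ, 0 ≤ t → ‖T t‖ ≤ M * Real.exp (-ω * t))
    (hRlam : ∀ lam : ℝ, 0 < lam → ∀ x : X,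
      Rlam lam x = ∫ t in Ioi (0 : ℝ), Real.exp (-lam * t) • T t x)
    (lam : ℝ) (hlam : 0 < lam) (c : ℝ) (x : X) :
    Rlam lam (c • x) = c • Rlam lam x := by
  rw [hRlam lam hlam x, hRlam lam hlam (c • x), ← integral_smul]
  congr 1
  funext t
  rw [(T t).map_smul_of_tower, smul_comm]

lemma LEaux_Rlam_norm (hω : 0 < ω)
    (hTcont : ∀ x : X, ContinuousOn (fun t => T t x) (Ici (0 : ℝ)))
    (hTexp : ∀ t : ℝ, 0 ≤ t → ‖T t‖ ≤ M * Real.exp (-ω * t))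
    (hRlam : ∀ lam : ℝ, 0 < lam → ∀ x : X,
      Rlam lam x = ∫ t in Ioi (0 : ℝ), Real.exp (-lam * t) • T t x)
    (lam : ℝ) (hlam : 0 < lam) (x : X) :
    ‖Rlam lam x‖ ≤ M / ω * ‖x‖ := by
  rw [hRlam lam hlam x]
  have hg : IntegrableOn (fun t => M * ‖x‖ * Real.exp (-ω * t)) (Ioi 0) :=
    (exp_neg_integrableOn_Ioi 0 hω).const_mul _
  have hb : ∀ᵐ t ∂(volume.restrict (Ioi (0:ℝ))),
      ‖Real.exp (-lam * t) • T t x‖ ≤ M * ‖x‖ * Real.exp (-ω * t) := by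
    filter_upwards [ae_restrict_mem measurableSet_Ioi] with t ht
    have ht0 : (0:ℝ) ≤ t := le_of_lt ht
    have h1 : ‖T t x‖ ≤ M * Real.exp (-ω * t) * ‖x‖ :=
      le_trans ((T t).le_opNorm x) (mul_le_mul_of_nonneg_right (hTexp t ht0) (norm_nonneg x))
    have h2 : Real.exp (-lam * t) ≤ 1 := by
      apply Real.exp_le_one_iff.2; nlinarith
    calc ‖Real.exp (-lam * t) • T t x‖ = Real.exp (-lam * t) * ‖T t x‖ := by
          rw [norm_smul, Real.norm_eq_abs, abs_of_pos (Real.exp_pos _)]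
      _ ≤ 1 * (M * Real.exp (-ω * t) * ‖x‖) :=
          mul_le_mul h2 h1 (norm_nonneg _) zero_le_one
      _ = M * ‖x‖ * Real.exp (-ω * t) := by ring
  calc ‖∫ t in Ioi (0:ℝ), Real.exp (-lam * t) • T t x‖
      ≤ ∫ t in Ioi (0:ℝ), M * ‖x‖ * Real.exp (-ω * t) :=
        norm_integral_le_of_norm_le hg hb
    _ = M * ‖x‖ * ∫ t in Ioi (0:ℝ), Real.exp (-ω * t) := by rw [integral_const_mul]
    _ = M / ω * ‖x‖ := by
        rw [LEaux_integral_exp_Ioi ω 0 hω]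
        simp
        ring

lemma LEaux_Rlam_cont (hω : 0 < ω)
    (hTcont : ∀ x : X, ContinuousOn (fun t => T t x) (Ici (0 : ℝ)))
    (hTexp : ∀ t : ℝ, 0 ≤ t → ‖T t‖ ≤ M * Real.exp (-ω * t))
    (hRlam : ∀ lam : ℝ, 0 < lam → ∀ x : X,
      Rlam lam x = ∫ t in Ioi (0 : ℝ), Real.exp (-lam * t) • T t x)
    (lam : ℝ) (hlam : 0 < lam) : Continuous (Rlam lam) := by
  have : LipschitzWith (Real.toNNReal (M / ω)) (Rlam lam) := by
    refine LipschitzWith.of_dist_le_mul (fun a b => ?_)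
    rw [dist_eq_norm, dist_eq_norm,
      LEaux_Rlam_sub hω hTcont hTexp hRlam lam hlam a b]
    refine le_trans (LEaux_Rlam_norm hω hTcont hTexp hRlam lam hlam (a - b)) ?_
    exact mul_le_mul_of_nonneg_right (Real.le_coe_toNNReal _) (norm_nonneg _)
  exact this.continuous

lemma LEaux_resolvent (hω : 0 < ω)
    (hTsemi : ∀ s t : ℝ, 0 ≤ s → 0 ≤ t → T (s + t) = (T s).comp (T t))
    (hTcont : ∀ x : X, ContinuousOn (fun t => T t x) (Ici (0 : ℝ)))
    (hTexp : ∀ t : ℝ, 0 ≤ t → ‖T t‖ ≤ M * Real.exp (-ω * t))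
    (R : X →L[ℂ] X) (hR : ∀ x : X, R x = ∫ t in Ioi (0 : ℝ), T t x)
    (hRlam : ∀ lam : ℝ, 0 < lam → ∀ x : X,
      Rlam lam x = ∫ t in Ioi (0 : ℝ), Real.exp (-lam * t) • T t x)
    (lam : ℝ) (hlam : 0 < lam) (x : X) :
    R x - Rlam lam x = lam • Rlam lam (R x) := by
  set G : ℝ → ℝ → X :=
    fun s u => Real.exp (-lam * s) • (Ioi s).indicator (fun v => T v x) u with hG
  set P := (volume.restrict (Ioi (0:ℝ))).prod (volume.restrict (Ioi (0:ℝ))) with hP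
  -- RHS as a double integral
  have hstep1 : Rlam lam (R x) = ∫ s in Ioi (0:ℝ), ∫ u in Ioi (0:ℝ), G s u := by
    rw [hRlam lam hlam]
    refine setIntegral_congr_fun measurableSet_Ioi (fun s hs => ?_)
    have h1 : ∫ u in Ioi (0:ℝ), G s u
        = Real.exp (-lam * s) • ∫ u in Ioi (0:ℝ), (Ioi s).indicator (fun v => T v x) u := by
      simp only [hG, integral_smul]
    rw [h1, setIntegral_indicator measurableSet_Ioi,
      inter_eq_right.2 (Ioi_subset_Ioi (le_of_lt hs)),
      ← LEaux_shift hω hTsemi hTcont hTexp R hR s (le_of_lt hs) x]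
  -- integrability on the product
  have hGeq : Function.uncurry G
      = ({p : ℝ × ℝ | p.1 < p.2}).indicator
        (fun p => Real.exp (-lam * p.1) • T p.2 x) := by
    funext p
    by_cases h : p.1 < p.2
    · simp [Function.uncurry, hG, indicator_apply, mem_Ioi, h]
    · simp [Function.uncurry, hG, indicator_apply, mem_Ioi, h]
  have hA : MeasurableSet {p : ℝ × ℝ | p.1 < p.2} :=
    measurableSet_lt measurable_fst measurable_snd
  have hmeas : AEStronglyMeasurable (Function.uncurry G) P := by
    rw [hGeq]
    refine AEStronglyMeasurable.indicator ?_ hA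
    exact ((Real.continuous_exp.comp
      (continuous_const.mul continuous_fst)).aestronglyMeasurable).smul
      ((LEaux_meas hTcont x).comp_snd)
  have haemem : ∀ᵐ p ∂P, p ∈ (Ioi (0:ℝ)) ×ˢ (Ioi (0:ℝ)) := by
    rw [hP, Measure.prod_restrict]
    exact ae_restrict_mem (measurableSet_Ioi.prod measurableSet_Ioi)
  have hint : Integrable (Function.uncurry G) P := by
    refine Integrable.mono'
      (g := fun p : ℝ × ℝ => Real.exp (-lam * p.1) * (M * ‖x‖ * Real.exp (-ω * p.2)))
      ?_ hmeas ?_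
    · exact Integrable.mul_prod (exp_neg_integrableOn_Ioi 0 hlam)
        ((exp_neg_integrableOn_Ioi 0 hω).const_mul _)
    · filter_upwards [haemem] with p hp
      obtain ⟨hp1, hp2⟩ := hp
      have hb : ‖(Ioi p.1).indicator (fun v => T v x) p.2‖ ≤ M * Real.exp (-ω * p.2) * ‖x‖ := by
        refine le_trans (norm_indicator_le_norm_self _ _) ?_
        exact le_trans ((T p.2).le_opNorm x)
          (mul_le_mul_of_nonneg_right (hTexp p.2 (le_of_lt hp2)) (norm_nonneg x))
      calc ‖Function.uncurry G p‖
          = Real.exp (-lam * p.1) * ‖(Ioi p.1).indicator (fun v => T v x) p.2‖ := by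
            simp only [Function.uncurry, hG, norm_smul, Real.norm_eq_abs,
              abs_of_pos (Real.exp_pos _)]
        _ ≤ Real.exp (-lam * p.1) * (M * Real.exp (-ω * p.2) * ‖x‖) := by
            exact mul_le_mul_of_nonneg_left hb (le_of_lt (Real.exp_pos _))
        _ = Real.exp (-lam * p.1) * (M * ‖x‖ * Real.exp (-ω * p.2)) := by ring
  have hswap := integral_integral_swap hint
  -- inner integral after swapping
  have hinner : ∀ u ∈ Ioi (0:ℝ),
      ∫ s in Ioi (0:ℝ), G s u = ((1 - Real.exp (-lam * u)) / lam) • T u x := by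
    intro u hu
    have h1 : (fun s => G s u) = (Iio u).indicator (fun s => Real.exp (-lam * s) • T u x) := by
      funext s
      by_cases hs : s < u
      · simp [hG, indicator_apply, mem_Ioi, mem_Iio, hs]
      · simp [hG, indicator_apply, mem_Ioi, mem_Iio, hs]
    rw [h1, setIntegral_indicator measurableSet_Iio, Ioi_inter_Iio,
      ← integral_Ioc_eq_integral_Ioo, integral_smul_const]
    congr 1
    have h2 := LEaux_integral_exp_Ioc lam u (le_of_lt hu)
    rw [integral_const_mul] at h2
    rw [eq_div_iff (ne_of_gt hlam), mul_comm]
    exact h2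
  -- LHS as a single integral
  have hlhs : R x - Rlam lam x = ∫ u in Ioi (0:ℝ), (1 - Real.exp (-lam * u)) • T u x := by
    rw [hR x, hRlam lam hlam x,
      ← integral_sub (LEaux_int0 hω hTcont hTexp x) (LEaux_intexp hω hTcont hTexp lam hlam.le x)]
    refine setIntegral_congr_fun measurableSet_Ioi (fun u _ => ?_)
    rw [sub_smul, one_smul]
  rw [hlhs, hstep1, hswap, setIntegral_congr_fun measurableSet_Ioi hinner, ← integral_smul]
  refine setIntegral_congr_fun measurableSet_Ioi (fun u _ => ?_)
  rw [smul_smul, mul_div_cancel₀ _ (ne_of_gt hlam)]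

lemma LEaux_approx (hM : 1 ≤ M) (hω : 0 < ω) (hT0 : T 0 = 1)
    (hTcont : ∀ x : X, ContinuousOn (fun t => T t x) (Ici (0 : ℝ)))
    (hTexp : ∀ t : ℝ, 0 ≤ t → ‖T t‖ ≤ M * Real.exp (-ω * t))
    (hRlam : ∀ lam : ℝ, 0 < lam → ∀ x : X,
      Rlam lam x = ∫ t in Ioi (0 : ℝ), Real.exp (-lam * t) • T t x)
    (w : X) : Tendsto (fun lam : ℝ => lam • Rlam lam w) atTop (nhds w) := by
  rw [Metric.tendsto_atTop]
  intro ε hε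
  have hc : ContinuousWithinAt (fun t => T t w) (Ici (0:ℝ)) 0 :=
    (hTcont w) 0 (mem_Ici.2 le_rfl)
  rw [Metric.continuousWithinAt_iff] at hc
  obtain ⟨δ, hδpos, hδ⟩ := hc (ε/4) (by linarith)
  set δ' := δ/2 with hδ'def
  have hδ'pos : 0 < δ' := by positivity
  have hsmall : ∀ t ∈ Ioc (0:ℝ) δ', ‖T t w - w‖ ≤ ε/4 := by
    intro t ht
    have h0 := hδ (mem_Ici.2 ht.1.le)
      (by rw [Real.dist_eq, sub_zero, abs_of_pos ht.1]
          have := ht.2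
          rw [hδ'def] at this
          linarith)
    have hTw : T 0 w = w := by rw [hT0]; rfl
    simp only [hTw] at h0
    rw [dist_eq_norm] at h0
    exact le_of_lt h0
  have htail : Tendsto (fun lam : ℝ => (M+1) * ‖w‖ * Real.exp (-lam * δ')) atTop (nhds 0) := by
    have h1 : Tendsto (fun lam : ℝ => -lam * δ') atTop atBot := by
      have : Tendsto (fun lam : ℝ => lam * (-δ')) atTop atBot :=
        Tendsto.atTop_mul_const_of_neg (neg_lt_zero.2 hδ'pos) tendsto_id
      refine this.congr (fun lam => by ring)
    have h2 := Real.tendsto_exp_atBot.comp h1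
    have h3 := h2.const_mul ((M+1) * ‖w‖)
    simpa using h3
  obtain ⟨N1, hN1⟩ := (Metric.tendsto_atTop.1 htail) (ε/4) (by linarith)
  refine ⟨max N1 1, fun lam hlam => ?_⟩
  have hlam1 : (1:ℝ) ≤ lam := le_trans (le_max_right _ _) hlam
  have hlampos : (0:ℝ) < lam := lt_of_lt_of_le one_pos hlam1
  have htailb : (M+1) * ‖w‖ * Real.exp (-lam * δ') < ε/4 := by
    have := hN1 lam (le_trans (le_max_left _ _) hlam)
    rw [Real.dist_eq, sub_zero] at this
    calc (M+1) * ‖w‖ * Real.exp (-lam * δ')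
        ≤ |(M+1) * ‖w‖ * Real.exp (-lam * δ')| := le_abs_self _
      _ < ε/4 := this
  set f : ℝ → X := fun t => Real.exp (-lam * t) • (T t w - w) with hf
  have hfeq : f = fun t => Real.exp (-lam * t) • T t w - Real.exp (-lam * t) • w := by
    funext t; exact smul_sub _ _ _
  have hfint : IntegrableOn f (Ioi (0:ℝ)) := by
    rw [hfeq]
    exact (LEaux_intexp hω hTcont hTexp lam hlampos.le w).sub
      ((exp_neg_integrableOn_Ioi 0 hlampos).smul_const w)
  -- identity
  have hIoi0 : ∫ t in Ioi (0:ℝ), Real.exp (-lam * t) = 1 / lam := by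
    rw [LEaux_integral_exp_Ioi lam 0 hlampos]
    simp
  have hid : lam • Rlam lam w - w = lam • ∫ t in Ioi (0:ℝ), f t := by
    have e2 : ∫ t in Ioi (0:ℝ), Real.exp (-lam * t) • w = (1/lam) • w := by
      rw [integral_smul_const, hIoi0]
    have e3 : ∫ t in Ioi (0:ℝ), f t = Rlam lam w - (1/lam) • w := by
      rw [hfeq, integral_sub (LEaux_intexp hω hTcont hTexp lam hlampos.le w)
        ((exp_neg_integrableOn_Ioi 0 hlampos).smul_const w), e2, hRlam lam hlampos]
    rw [e3, smul_sub, smul_smul, mul_one_div, div_self (ne_of_gt hlampos), one_smul]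
  -- split the integral
  have hsplit : ∫ t in Ioi (0:ℝ), f t = (∫ t in Ioc 0 δ', f t) + ∫ t in Ioi δ', f t := by
    rw [← Ioc_union_Ioi_eq_Ioi (le_of_lt hδ'pos)]
    exact setIntegral_union (Ioc_disjoint_Ioi le_rfl) measurableSet_Ioi
      (hfint.mono_set (by rw [← Ioc_union_Ioi_eq_Ioi (le_of_lt hδ'pos)]; exact subset_union_left))
      (hfint.mono_set (by rw [← Ioc_union_Ioi_eq_Ioi (le_of_lt hδ'pos)]; exact subset_union_right))
  -- first piece
  have hIoc : ∫ t in Ioc (0:ℝ) δ', Real.exp (-lam * t) = (1 - Real.exp (-lam * δ'))/lam := by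
    have h2 := LEaux_integral_exp_Ioc lam δ' (le_of_lt hδ'pos)
    rw [integral_const_mul] at h2
    rw [eq_div_iff (ne_of_gt hlampos), mul_comm]
    exact h2
  have hb1 : ‖∫ t in Ioc (0:ℝ) δ', f t‖ ≤ ε/4 * (1/lam) := by
    have := norm_integral_le_of_norm_le
      (f := f) (g := fun t => Real.exp (-lam * t) * (ε/4))
      (((exp_neg_integrableOn_Ioi 0 hlampos).mono_set Ioc_subset_Ioi_self).mul_const _)
      (by
        filter_upwards [ae_restrict_mem measurableSet_Ioc] with t ht
        rw [hf, norm_smul, Real.norm_eq_abs, abs_of_pos (Real.exp_pos _)]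
        exact mul_le_mul_of_nonneg_left (hsmall t ht) (le_of_lt (Real.exp_pos _)))
    refine le_trans this ?_
    rw [integral_mul_const, hIoc, div_mul_eq_mul_div, mul_one_div]
    gcongr ?_ / lam
    nlinarith [Real.exp_pos (-lam * δ')]
  -- second piece
  have hIoiδ : ∫ t in Ioi δ', Real.exp (-lam * t) = Real.exp (-lam * δ')/lam :=
    LEaux_integral_exp_Ioi lam δ' hlampos
  have hb2 : ‖∫ t in Ioi δ', f t‖ ≤ (M+1) * ‖w‖ * (Real.exp (-lam * δ')/lam) := by
    have := norm_integral_le_of_norm_le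
      (f := f) (g := fun t => Real.exp (-lam * t) * ((M+1) * ‖w‖))
      (((exp_neg_integrableOn_Ioi 0 hlampos).mono_set (Ioi_subset_Ioi (le_of_lt hδ'pos))).mul_const _)
      (by
        filter_upwards [ae_restrict_mem measurableSet_Ioi] with t ht
        have ht0 : (0:ℝ) ≤ t := le_trans (le_of_lt hδ'pos) (le_of_lt ht)
        have hTb : ‖T t w - w‖ ≤ (M+1) * ‖w‖ := by
          have h1 : ‖T t w‖ ≤ M * Real.exp (-ω * t) * ‖w‖ :=
            le_trans ((T t).le_opNorm w)
              (mul_le_mul_of_nonneg_right (hTexp t ht0) (norm_nonneg w))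
          have h2 : Real.exp (-ω * t) ≤ 1 := by
            apply Real.exp_le_one_iff.2; nlinarith
          have h3 : ‖T t w - w‖ ≤ ‖T t w‖ + ‖w‖ := norm_sub_le _ _
          have h4 : M * Real.exp (-ω * t) * ‖w‖ ≤ M * ‖w‖ := by
            have hMnn : (0:ℝ) ≤ M := by linarith
            have heq : M * Real.exp (-ω * t) * ‖w‖ = (M * ‖w‖) * Real.exp (-ω * t) := by ring
            rw [heq]
            exact mul_le_of_le_one_right (mul_nonneg hMnn (norm_nonneg w)) h2
          nlinarith
        rw [hf, norm_smul, Real.norm_eq_abs, abs_of_pos (Real.exp_pos _)]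
        exact mul_le_mul_of_nonneg_left hTb (le_of_lt (Real.exp_pos _)))
    refine le_trans this ?_
    rw [integral_mul_const, hIoiδ]
    ring_nf
    exact le_rfl
  -- combine
  rw [dist_eq_norm, hid, norm_smul, Real.norm_eq_abs, abs_of_pos hlampos, hsplit]
  calc lam * ‖(∫ t in Ioc (0:ℝ) δ', f t) + ∫ t in Ioi δ', f t‖
      ≤ lam * (‖∫ t in Ioc (0:ℝ) δ', f t‖ + ‖∫ t in Ioi δ', f t‖) :=
        mul_le_mul_of_nonneg_left (norm_add_le _ _) (le_of_lt hlampos)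
    _ ≤ lam * (ε/4 * (1/lam) + (M+1) * ‖w‖ * (Real.exp (-lam * δ')/lam)) :=
        mul_le_mul_of_nonneg_left (add_le_add hb1 hb2) (le_of_lt hlampos)
    _ = ε/4 + (M+1) * ‖w‖ * Real.exp (-lam * δ') := by
        field_simp
    _ < ε := by linarith

lemma LEaux_RlamR (hω : 0 < ω)
    (hTsemi : ∀ s t : ℝ, 0 ≤ s → 0 ≤ t → T (s + t) = (T s).comp (T t))
    (hTcont : ∀ x : X, ContinuousOn (fun t => T t x) (Ici (0 : ℝ)))
    (hTexp : ∀ t : ℝ, 0 ≤ t → ‖T t‖ ≤ M * Real.exp (-ω * t))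
    (R : X →L[ℂ] X) (hR : ∀ x : X, R x = ∫ t in Ioi (0 : ℝ), T t x)
    (hRlam : ∀ lam : ℝ, 0 < lam → ∀ x : X,
      Rlam lam x = ∫ t in Ioi (0 : ℝ), Real.exp (-lam * t) • T t x)
    (lam : ℝ) (hlam : 0 < lam) (x : X) : Rlam lam (R x) = R (Rlam lam x) := by
  rw [hRlam lam hlam (R x), hRlam lam hlam x,
    ← R.integral_comp_comm (LEaux_intexp hω hTcont hTexp lam hlam.le x)]
  refine setIntegral_congr_fun measurableSet_Ioi (fun s hs => ?_)
  rw [LEaux_TRcomm hω hTsemi hTcont hTexp R hR s (le_of_lt hs) x, R.map_smul_of_tower]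

end Aux


/-- The Lambda extension `C_Λ x = lim_{λ → ∞} λ C (R_λ x)`, with
`R_λ = (λI - A)⁻¹` given by `R_λ x = ∫₀^∞ e^{-λt} T t x dt`, of an operator `C` on
`D = range R` which commutes with the exponentially stable semigroup `T`, commutes with
`R`, and is such that `C ∘ R` is bounded, is a closed operator. -/
theorem lambda_extension_closed
    {X : Type*} [NormedAddCommGroup X] [InnerProductSpace ℂ X] [CompleteSpace X]
    (T : ℝ → X →L[ℂ] X) (M ω : ℝ) (hM : 1 ≤ M) (hω : 0 < ω)
    (hT0 : T 0 = 1)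
    (hTsemi : ∀ s t : ℝ, 0 ≤ s → 0 ≤ t → T (s + t) = (T s).comp (T t))
    (hTcont : ∀ x : X, ContinuousOn (fun t => T t x) (Ici (0 : ℝ)))
    (hTexp : ∀ t : ℝ, 0 ≤ t → ‖T t‖ ≤ M * Real.exp (-ω * t))
    (R : X →L[ℂ] X)
    (hR : ∀ x : X, R x = ∫ t in Ioi (0 : ℝ), T t x)
    (hRinj : Function.Injective R)
    (Rlam : ℝ → X → X)
    (hRlam : ∀ lam : ℝ, 0 < lam → ∀ x : X,
      Rlam lam x = ∫ t in Ioi (0 : ℝ), Real.exp (-lam * t) • T t x)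
    (hRlamD : ∀ lam : ℝ, 0 < lam → ∀ x : X, Rlam lam x ∈ Set.range R)
    (C : X →ₗ[ℂ] X) (K : ℝ)
    (hCR : ∀ x : X, ‖C (R x)‖ ≤ K * ‖x‖)
    (hCcomm : ∀ t : ℝ, 0 ≤ t → ∀ y ∈ Set.range R, C (T t y) = T t (C y))
    (hCRcomm : ∀ y ∈ Set.range R, C (R y) = R (C y)) :
    ∀ (u : ℕ → X) (l : ℕ → X) (x z : X),
      (∀ n, Tendsto (fun lam : ℝ => lam • C (Rlam lam (u n))) atTop (nhds (l n))) →
      Tendsto u atTop (nhds x) → Tendsto l atTop (nhds z) →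
      Tendsto (fun lam : ℝ => lam • C (Rlam lam x)) atTop (nhds z) := by
  intro u l x z hu hux hlz
  -- the bounded operator C ∘ R
  set CRclm : X →L[ℂ] X :=
    LinearMap.mkContinuous (C.comp (R : X →ₗ[ℂ] X)) K (fun y => hCR y) with hCRclm
  have hCRapp : ∀ y : X, CRclm y = C (R y) := fun y => rfl
  -- the Lambda-formula operators are continuous
  have hkey : ∀ lam : ℝ, 0 < lam → ∀ a : X,
      C (Rlam lam a) = CRclm (a - lam • Rlam lam a) := by
    intro lam hlam a
    have h1 : R a - Rlam lam a = R (lam • Rlam lam a) := by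
      rw [LEaux_resolvent hω hTsemi hTcont hTexp R hR hRlam lam hlam a,
        LEaux_RlamR hω hTsemi hTcont hTexp R hR hRlam lam hlam a, R.map_smul_of_tower]
    have h2 : Rlam lam a = R (a - lam • Rlam lam a) := by
      rw [map_sub, ← h1]
      abel
    conv_lhs => rw [h2]
    exact (hCRapp _).symm
  have hcont : ∀ lam : ℝ, 0 < lam → Continuous (fun a => C (Rlam lam a)) := by
    intro lam hlam
    have heq : (fun a => C (Rlam lam a)) = fun a => CRclm (a - lam • Rlam lam a) :=
      funext (hkey lam hlam)
    rw [heq]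
    exact CRclm.continuous.comp (continuous_id.sub
      ((LEaux_Rlam_cont hω hTcont hTexp hRlam lam hlam).const_smul lam))
  -- commutation of Rlam with C on elements of the form (Rlam mu x)
  have claimA : ∀ lam : ℝ, 0 < lam → ∀ mu : ℝ, 0 < mu → ∀ a : X,
      Rlam lam (C (Rlam mu a)) = C (Rlam lam (Rlam mu a)) := by
    intro lam hlam mu hmu a
    obtain ⟨v, hv⟩ := hRlamD mu hmu a
    rw [← hv]
    have h1 : Rlam lam (C (R v)) = CRclm (Rlam lam v) := by
      rw [hRlam lam hlam (C (R v)), hRlam lam hlam v,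
        ← CRclm.integral_comp_comm (LEaux_intexp hω hTcont hTexp lam hlam.le v)]
      refine setIntegral_congr_fun measurableSet_Ioi (fun t ht => ?_)
      rw [CRclm.map_smul_of_tower, hCRapp,
        ← LEaux_TRcomm hω hTsemi hTcont hTexp R hR t (le_of_lt ht) v,
        hCcomm t (le_of_lt ht) (R v) ⟨v, rfl⟩]
    rw [h1, hCRapp, ← LEaux_RlamR hω hTsemi hTcont hTexp R hR hRlam lam hlam v]
  -- Step 1: C (Rlam lam (u n)) = Rlam lam (l n)
  have step1 : ∀ lam : ℝ, 0 < lam → ∀ n, C (Rlam lam (u n)) = Rlam lam (l n) := by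
    intro lam hlam n
    have h1 : Tendsto (fun mu : ℝ => C (Rlam lam (mu • Rlam mu (u n)))) atTop
        (nhds (C (Rlam lam (u n)))) :=
      ((hcont lam hlam).tendsto (u n)).comp
        (LEaux_approx hM hω hT0 hTcont hTexp hRlam (u n))
    have h2 : (fun mu : ℝ => C (Rlam lam (mu • Rlam mu (u n)))) =ᶠ[atTop]
        (fun mu : ℝ => Rlam lam (mu • C (Rlam mu (u n)))) := by
      filter_upwards [eventually_gt_atTop (0:ℝ)] with mu hmu
      calc C (Rlam lam (mu • Rlam mu (u n)))
          = C (mu • Rlam lam (Rlam mu (u n))) := by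
            rw [LEaux_Rlam_smul_real hω hTcont hTexp hRlam lam hlam mu _]
        _ = mu • C (Rlam lam (Rlam mu (u n))) := C.map_smul_of_tower mu _
        _ = mu • Rlam lam (C (Rlam mu (u n))) := by rw [claimA lam hlam mu hmu (u n)]
        _ = Rlam lam (mu • C (Rlam mu (u n))) :=
            (LEaux_Rlam_smul_real hω hTcont hTexp hRlam lam hlam mu _).symm
    have h3 : Tendsto (fun mu : ℝ => Rlam lam (mu • C (Rlam mu (u n)))) atTop
        (nhds (Rlam lam (l n))) :=
      ((LEaux_Rlam_cont hω hTcont hTexp hRlam lam hlam).tendsto (l n)).comp (hu n)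
    exact tendsto_nhds_unique (h1.congr' h2) h3
  -- Step 2: C (Rlam lam x) = Rlam lam z
  have step2 : ∀ lam : ℝ, 0 < lam → C (Rlam lam x) = Rlam lam z := by
    intro lam hlam
    have h1 : Tendsto (fun n => C (Rlam lam (u n))) atTop (nhds (C (Rlam lam x))) :=
      ((hcont lam hlam).tendsto x).comp hux
    have h2 : (fun n => C (Rlam lam (u n))) = fun n => Rlam lam (l n) :=
      funext (fun n => step1 lam hlam n)
    rw [h2] at h1
    have h3 : Tendsto (fun n => Rlam lam (l n)) atTop (nhds (Rlam lam z)) :=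
      ((LEaux_Rlam_cont hω hTcont hTexp hRlam lam hlam).tendsto z).comp hlz
    exact tendsto_nhds_unique h1 h3
  -- conclude
  have h4 := LEaux_approx hM hω hT0 hTcont hTexp hRlam z
  refine Tendsto.congr' ?_ h4
  filter_upwards [eventually_gt_atTop (0:ℝ)] with lam hlam
  rw [step2 lam hlam]
end

section
/- Let X be a complex Hilbert space, T(t), t ≥ 0, an exponentially stable strongly continuous semigroup on X, and R : X → X the bounded operator R x = ∫₀^∞ T(t)x dt. Let D = range(R) and let C : D → X be a linear map such that C ∘ R is bounded on X and C(R y) = R(C y) for all y ∈ D. Define the Lebesgue extension C_L by: x ∈ D(C_L) iff C_L x := lim_{t↓0} (1/t) C(R x - R(T(t)x)) exists. Then for every x ∈ D(C_L) one has R(C_L x) = C(R x); in particular R x ∈ D(C_L) and C_L(R x) = C(R x), i.e. the Lebesgue extension commutes with A^{-1} = -R. -/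
open MeasureTheory Set Filter

/-- For an exponentially stable strongly continuous semigroup `T` with
`R x = ∫₀^∞ T t x dt = -A⁻¹ x`, and `C` on `D = range R` with `C ∘ R` bounded and
`C (R y) = R (C y)` on `D`, the Lebesgue extension
`C_L x = lim_{t ↓ 0} (1/t) C (R x - R (T t x))` satisfies `R (C_L x) = C (R x)` on its
domain; in particular `R x ∈ D(C_L)` with `C_L (R x) = C (R x)`. -/
theorem lebesgue_extension_commutes_with_inverse
    {X : Type*} [NormedAddCommGroup X] [InnerProductSpace ℂ X] [CompleteSpace X]
    (T : ℝ → X →L[ℂ] X) (M ω : ℝ) (hM : 1 ≤ M) (hω : 0 < ω)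
    (hT0 : T 0 = 1)
    (hTsemi : ∀ s t : ℝ, 0 ≤ s → 0 ≤ t → T (s + t) = (T s).comp (T t))
    (hTcont : ∀ x : X, ContinuousOn (fun t => T t x) (Ici (0 : ℝ)))
    (hTexp : ∀ t : ℝ, 0 ≤ t → ‖T t‖ ≤ M * Real.exp (-ω * t))
    (R : X →L[ℂ] X)
    (hR : ∀ x : X, R x = ∫ t in Ioi (0 : ℝ), T t x)
    (C : X →ₗ[ℂ] X) (K : ℝ)
    (hCR : ∀ x : X, ‖C (R x)‖ ≤ K * ‖x‖)
    (hCRcomm : ∀ y ∈ Set.range R, C (R y) = R (C y)) :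
    (∀ x z : X,
      Tendsto (fun t : ℝ => (1 / t) • C (R x - R (T t x)))
        (nhdsWithin 0 (Ioi (0 : ℝ))) (nhds z) → R z = C (R x)) ∧
    (∀ x : X,
      Tendsto (fun t : ℝ => (1 / t) • C (R (R x) - R (T t (R x))))
        (nhdsWithin 0 (Ioi (0 : ℝ))) (nhds (C (R x)))) := by
  -- measurability of the orbit maps
  have hTmeas : ∀ x : X,
      AEStronglyMeasurable (fun τ : ℝ => T τ x) (volume.restrict (Ioi 0)) := fun x =>
    ((hTcont x).mono Ioi_subset_Ici_self).aestronglyMeasurable measurableSet_Ioi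
  -- integrability of the orbit maps on (0, ∞)
  have hInt : ∀ x : X, IntegrableOn (fun τ : ℝ => T τ x) (Ioi 0) := by
    intro x
    have hdom : IntegrableOn (fun τ : ℝ => M * Real.exp (-ω * τ) * ‖x‖) (Ioi 0) :=
      (((exp_neg_integrableOn_Ioi 0 hω).const_mul M).mul_const ‖x‖)
    refine hdom.mono' (hTmeas x) ?_
    filter_upwards [ae_restrict_mem measurableSet_Ioi] with τ hτ
    have h1 : ‖T τ x‖ ≤ ‖T τ‖ * ‖x‖ := (T τ).le_opNorm x
    have h2 : ‖T τ‖ * ‖x‖ ≤ M * Real.exp (-ω * τ) * ‖x‖ :=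
      mul_le_mul_of_nonneg_right (hTexp τ (le_of_lt hτ)) (norm_nonneg x)
    calc ‖T τ x‖ ≤ ‖T τ‖ * ‖x‖ := h1
      _ ≤ M * Real.exp (-ω * τ) * ‖x‖ := h2
  -- T t commutes with R
  have hcomm : ∀ t : ℝ, 0 ≤ t → ∀ x : X, T t (R x) = R (T t x) := by
    intro t ht x
    rw [hR, hR, ← ContinuousLinearMap.integral_comp_comm (T t) (hInt x)]
    refine setIntegral_congr_fun measurableSet_Ioi fun τ hτ => ?_
    have hτ' : (0:ℝ) ≤ τ := le_of_lt hτ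
    have h1 := hTsemi t τ ht hτ'
    have h2 := hTsemi τ t hτ' ht
    calc T t (T τ x) = T (t + τ) x := by rw [h1]; rfl
      _ = T (τ + t) x := by rw [add_comm]
      _ = T τ (T t x) := by rw [h2]; rfl
  -- R x - R (T t x) = ∫_{(0,t]} T τ x
  have hsplit : ∀ t : ℝ, 0 ≤ t → ∀ x : X,
      R x - R (T t x) = ∫ τ in Ioc (0:ℝ) t, T τ x := by
    intro t ht x
    have htrans : R (T t x) = ∫ τ in Ioi t, T τ x := by
      rw [hR]
      have hmp := (measurePreserving_add_right (volume : Measure ℝ) t)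
      have hme := measurableEmbedding_addRight t
      have key := hmp.setIntegral_preimage_emb hme (fun τ => T τ x) (Ioi t)
      have hpre : (fun x : ℝ => x + t) ⁻¹' Ioi t = Ioi 0 := by
        ext s; simp [Set.mem_preimage, lt_add_iff_pos_left]
      rw [hpre] at key
      rw [← key]
      refine setIntegral_congr_fun measurableSet_Ioi fun τ hτ => ?_
      have h2 := hTsemi τ t (le_of_lt hτ) ht
      show T τ (T t x) = T (τ + t) x
      rw [h2]; rfl
    have hunion : Ioc (0:ℝ) t ∪ Ioi t = Ioi 0 := Ioc_union_Ioi_eq_Ioi ht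
    have hdisj : Disjoint (Ioc (0:ℝ) t) (Ioi t) := Ioc_disjoint_Ioi le_rfl
    have hI1 : IntegrableOn (fun τ : ℝ => T τ x) (Ioc 0 t) :=
      (hInt x).mono_set Ioc_subset_Ioi_self
    have hI2 : IntegrableOn (fun τ : ℝ => T τ x) (Ioi t) :=
      (hInt x).mono_set (Ioi_subset_Ioi ht)
    have hsum : (∫ τ in Ioc (0:ℝ) t, T τ x) + ∫ τ in Ioi t, T τ x
        = ∫ τ in Ioi (0:ℝ), T τ x := by
      rw [← hunion]
      exact (setIntegral_union hdisj measurableSet_Ioi hI1 hI2).symm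
    rw [hR, htrans, ← hsum]
    abel
  -- the mean value limit: (1/t) • (R x - R (T t x)) → x as t → 0+
  have hlim : ∀ x : X,
      Tendsto (fun t : ℝ => (1 / t) • (R x - R (T t x)))
        (nhdsWithin 0 (Ioi (0:ℝ))) (nhds x) := by
    intro x
    rw [Metric.tendsto_nhdsWithin_nhds]
    intro ε hε
    have hcont : ContinuousWithinAt (fun τ => T τ x) (Ici (0:ℝ)) 0 :=
      (hTcont x) 0 (self_mem_Ici)
    have hT0x : T 0 x = x := by rw [hT0]; rfl
    rw [ContinuousWithinAt, hT0x, Metric.tendsto_nhdsWithin_nhds] at hcont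
    obtain ⟨δ, hδ, hδ'⟩ := hcont (ε / 2) (half_pos hε)
    refine ⟨δ, hδ, fun t ht hdist => ?_⟩
    have ht0 : (0:ℝ) < t := ht
    have htδ : t < δ := by
      rwa [Real.dist_eq, sub_zero, abs_of_pos ht0] at hdist
    -- pointwise bound on (0, t]
    have hbound : ∀ τ ∈ Ioc (0:ℝ) t, ‖T τ x - x‖ ≤ ε / 2 := by
      intro τ hτ
      have h1 : τ ∈ Ici (0:ℝ) := le_of_lt hτ.1
      have h2 : dist τ 0 < δ := by
        rw [Real.dist_eq, sub_zero, abs_of_pos hτ.1]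
        exact lt_of_le_of_lt hτ.2 htδ
      have := hδ' h1 h2
      rw [dist_eq_norm] at this
      exact le_of_lt this
    have hI1 : IntegrableOn (fun τ : ℝ => T τ x) (Ioc 0 t) :=
      (hInt x).mono_set Ioc_subset_Ioi_self
    have hIs : IntegrableOn (fun τ : ℝ => T τ x - x) (Ioc 0 t) :=
      hI1.sub (integrableOn_const measure_Ioc_lt_top.ne enorm_ne_top)
    have hvol : (volume (Ioc (0:ℝ) t)).toReal = t := by
      rw [Real.volume_Ioc]
      simp [ENNReal.toReal_ofReal (le_of_lt ht0)]
    have hintsub : (∫ τ in Ioc (0:ℝ) t, (T τ x - x)) =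
        (∫ τ in Ioc (0:ℝ) t, T τ x) - t • x := by
      rw [integral_sub hI1 (integrableOn_const measure_Ioc_lt_top.ne enorm_ne_top),
        setIntegral_const, Measure.real, hvol]
    have hnorm : ‖(∫ τ in Ioc (0:ℝ) t, T τ x) - t • x‖ ≤ ε / 2 * t := by
      rw [← hintsub]
      calc ‖∫ τ in Ioc (0:ℝ) t, (T τ x - x)‖
          ≤ ε / 2 * (volume (Ioc (0:ℝ) t)).toReal :=
            norm_setIntegral_le_of_norm_le_const measure_Ioc_lt_top hbound
        _ = ε / 2 * t := by rw [hvol]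
    rw [dist_eq_norm, hsplit t (le_of_lt ht0) x]
    have hrw : (1 / t) • (∫ τ in Ioc (0:ℝ) t, T τ x) - x
        = (1 / t) • ((∫ τ in Ioc (0:ℝ) t, T τ x) - t • x) := by
      rw [smul_sub, smul_smul]
      rw [one_div, inv_mul_cancel₀ (ne_of_gt ht0), one_smul]
    rw [hrw, norm_smul, Real.norm_eq_abs, abs_of_pos (by positivity : (0:ℝ) < 1 / t)]
    calc (1 / t) * ‖(∫ τ in Ioc (0:ℝ) t, T τ x) - t • x‖
        ≤ (1 / t) * (ε / 2 * t) := by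
          apply mul_le_mul_of_nonneg_left hnorm (by positivity)
      _ = ε / 2 := by field_simp
      _ < ε := half_lt_self hε
  -- the bounded operator g = C ∘ R
  let g : X →L[ℂ] X := LinearMap.mkContinuous (C.comp R.toLinearMap) K hCR
  have hg : ∀ x : X, g x = C (R x) := fun x => rfl
  -- Part 2
  have part2 : ∀ x : X,
      Tendsto (fun t : ℝ => (1 / t) • C (R (R x) - R (T t (R x))))
        (nhdsWithin 0 (Ioi (0:ℝ))) (nhds (C (R x))) := by
    intro x
    have key : Tendsto (fun t : ℝ => g ((1 / t) • (R x - R (T t x))))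
        (nhdsWithin 0 (Ioi (0:ℝ))) (nhds (g x)) :=
      (g.continuous.tendsto x).comp (hlim x)
    rw [hg] at key
    refine key.congr' ?_
    filter_upwards [self_mem_nhdsWithin] with t ht
    have ht0 : (0:ℝ) ≤ t := le_of_lt ht
    have h1 : R (T t (R x)) = R (R (T t x)) := by rw [hcomm t ht0 x]
    rw [g.map_smul_of_tower, hg, map_sub, h1]
  refine ⟨?_, part2⟩
  intro x z hz
  have hRz : Tendsto (fun t : ℝ => R ((1 / t) • C (R x - R (T t x))))
      (nhdsWithin 0 (Ioi (0:ℝ))) (nhds (R z)) :=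
    (R.continuous.tendsto z).comp hz
  have heq : ∀ t ∈ Ioi (0:ℝ), R ((1 / t) • C (R x - R (T t x)))
      = (1 / t) • C (R (R x) - R (T t (R x))) := by
    intro t ht
    have ht0 : (0:ℝ) ≤ t := le_of_lt ht
    have hmem : R x - R (T t x) ∈ Set.range R := by
      rw [← map_sub]; exact ⟨x - T t x, rfl⟩
    obtain ⟨y, hy⟩ := hmem
    have h1 : R (C (R x - R (T t x))) = C (R (R x - R (T t x))) := by
      rw [← hy, (hCRcomm (R y) ⟨y, rfl⟩).symm]
    have h2 : R (R x - R (T t x)) = R (R x) - R (T t (R x)) := by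
      rw [map_sub, hcomm t ht0 x]
    rw [R.map_smul_of_tower, h1, h2]
  have hRz' : Tendsto (fun t : ℝ => (1 / t) • C (R (R x) - R (T t (R x))))
      (nhdsWithin 0 (Ioi (0:ℝ))) (nhds (R z)) := by
    refine hRz.congr' ?_
    filter_upwards [self_mem_nhdsWithin] with t ht
    exact heq t ht
  exact tendsto_nhds_unique hRz' (part2 x)
end

section
/- Let X be a complex Hilbert space and T(t), t ≥ 0, a strongly continuous semigroup on X with ‖T(t)‖ ≤ M for all t ≥ 0. Let D be a dense T-invariant subspace and C : D → X linear, infinite-time admissible with constant m (∫₀^∞ ‖C T(t)x‖² dt ≤ m‖x‖² for x ∈ D) and commuting with the semigroup (C T(t)x = T(t) C x for x ∈ D, t ≥ 0). Suppose in addition that T(t₀) : X → X is surjective for some t₀ > 0 and that D = T(t₀)(D') for some subspace D' ⊆ D. Then C is bounded on D: there exists K ≥ 0 such that ‖C x‖ ≤ K ‖x‖ for all x ∈ D. -/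
open MeasureTheory Set Filter Topology

/-- (Remark after Theorem 2.2.) Let `T` be a uniformly bounded strongly
continuous semigroup on `X`, `D` a dense `T`-invariant subspace, and `C` admissible
(constant `m`) on `D` and commuting with the semigroup. If moreover `T t₀` is surjective
for some `t₀ > 0` and `D = T t₀ '' D'` for some subspace `D' ⊆ D`, then `C` is bounded
on `D`. -/
theorem surjective_semigroup_admissible_bounded
    {X : Type*} [NormedAddCommGroup X] [InnerProductSpace ℂ X] [CompleteSpace X]
    (T : ℝ → X →L[ℂ] X) (M : ℝ)
    (hT0 : T 0 = 1)
    (hTsemi : ∀ s t : ℝ, 0 ≤ s → 0 ≤ t → T (s + t) = (T s).comp (T t))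
    (hTcont : ∀ x : X, ContinuousOn (fun t => T t x) (Ici (0 : ℝ)))
    (hM : ∀ t : ℝ, 0 ≤ t → ‖T t‖ ≤ M)
    (D : Submodule ℂ X) (hDdense : Dense (D : Set X))
    (hD : ∀ t : ℝ, 0 ≤ t → ∀ x ∈ D, T t x ∈ D)
    (C : X →ₗ[ℂ] X) (m : ℝ)
    (hCmeas : ∀ x ∈ D, IntegrableOn (fun t => ‖C (T t x)‖ ^ 2) (Ioi (0 : ℝ)))
    (hCadm : ∀ x ∈ D, ∫ t in Ioi (0 : ℝ), ‖C (T t x)‖ ^ 2 ≤ m * ‖x‖ ^ 2)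
    (hCcomm : ∀ t : ℝ, 0 ≤ t → ∀ x ∈ D, C (T t x) = T t (C x))
    (t₀ : ℝ) (ht₀ : 0 < t₀)
    (hsurj : Function.Surjective (T t₀))
    (D' : Submodule ℂ X) (hD'D : D' ≤ D)
    (hDeq : (D : Set X) = (T t₀) '' (D' : Set X)) :
    ∃ K : ℝ, 0 ≤ K ∧ ∀ x ∈ D, ‖C x‖ ≤ K * ‖x‖ := by
    classical
  -- degenerate case m < 0 : then D = {0}
  by_cases hm : 0 ≤ m
  swap
  · push_neg at hm
    refine ⟨0, le_rfl, fun x hx => ?_⟩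
    have hx0 : x = 0 := by
      by_contra h
      have h1 : (0:ℝ) ≤ ∫ t in Ioi (0:ℝ), ‖C (T t x)‖ ^ 2 :=
        setIntegral_nonneg measurableSet_Ioi (fun t _ => by positivity)
      have h2 := hCadm x hx
      have h3 : 0 < ‖x‖ := norm_pos_iff.2 h
      nlinarith [pow_pos h3 2, mul_pos (neg_pos.2 hm) (pow_pos h3 2)]
    simp [hx0]
  have hM0 : 0 ≤ M := le_trans (norm_nonneg _) (hM 0 le_rfl)
  -- key estimate : for v ∈ D and t > 0, ‖T t (C v)‖ ≤ √(M²m/t) * ‖v‖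
  have key : ∀ t : ℝ, 0 < t → ∀ v ∈ D,
      ‖T t (C v)‖ ≤ Real.sqrt (M ^ 2 * m / t) * ‖v‖ := by
    intro t ht v hv
    have hpt : ∀ s ∈ Ioc (0:ℝ) t,
        ‖T t (C v)‖ ^ 2 ≤ M ^ 2 * ‖C (T s v)‖ ^ 2 := by
      intro s hs
      have hs0 : (0:ℝ) ≤ s := hs.1.le
      have hts : (0:ℝ) ≤ t - s := sub_nonneg.2 hs.2
      have hsplit : T t = (T (t - s)).comp (T s) := by
        have := hTsemi (t - s) s hts hs0
        rwa [sub_add_cancel] at this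
      have h1 : ‖T t (C v)‖ ≤ M * ‖C (T s v)‖ := by
        have e1 : T t (C v) = T (t - s) (T s (C v)) := by
          rw [hsplit]; rfl
        rw [e1, ← hCcomm s hs0 v hv]
        calc ‖T (t - s) (C (T s v))‖ ≤ ‖T (t - s)‖ * ‖C (T s v)‖ :=
              (T (t - s)).le_opNorm _
          _ ≤ M * ‖C (T s v)‖ :=
              mul_le_mul_of_nonneg_right (hM _ hts) (norm_nonneg _)
      calc ‖T t (C v)‖ ^ 2 ≤ (M * ‖C (T s v)‖) ^ 2 :=
            pow_le_pow_left₀ (norm_nonneg _) h1 2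
        _ = M ^ 2 * ‖C (T s v)‖ ^ 2 := by ring
    have hint : IntegrableOn (fun s => ‖C (T s v)‖ ^ 2) (Ioc 0 t) :=
      (hCmeas v hv).mono_set Ioc_subset_Ioi_self
    have hint2 : IntegrableOn (fun s => M ^ 2 * ‖C (T s v)‖ ^ 2) (Ioc 0 t) :=
      hint.const_mul _
    have hconst : IntegrableOn (fun _ : ℝ => ‖T t (C v)‖ ^ 2) (Ioc 0 t) :=
      integrableOn_const measure_Ioc_lt_top.ne
    have h2 : ∫ _ in Ioc (0:ℝ) t, ‖T t (C v)‖ ^ 2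
        ≤ ∫ s in Ioc (0:ℝ) t, M ^ 2 * ‖C (T s v)‖ ^ 2 :=
      setIntegral_mono_on hconst hint2 measurableSet_Ioc hpt
    rw [setIntegral_const] at h2
    have hvol : ((volume (Ioc (0:ℝ) t)).toReal) = t := by
      rw [Real.volume_Ioc, sub_zero, ENNReal.toReal_ofReal ht.le]
    have h3 : ∫ s in Ioc (0:ℝ) t, M ^ 2 * ‖C (T s v)‖ ^ 2
        = M ^ 2 * ∫ s in Ioc (0:ℝ) t, ‖C (T s v)‖ ^ 2 :=
      integral_const_mul _ _
    have h4 : ∫ s in Ioc (0:ℝ) t, ‖C (T s v)‖ ^ 2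
        ≤ ∫ s in Ioi (0:ℝ), ‖C (T s v)‖ ^ 2 :=
      setIntegral_mono_set (hCmeas v hv)
        (Eventually.of_forall (fun s => by positivity))
        (HasSubset.Subset.eventuallyLE Ioc_subset_Ioi_self)
    have h5 : t * ‖T t (C v)‖ ^ 2 ≤ M ^ 2 * (m * ‖v‖ ^ 2) := by
      have := hCadm v hv
      have hh : ∫ s in Ioc (0:ℝ) t, M ^ 2 * ‖C (T s v)‖ ^ 2
          ≤ M ^ 2 * (m * ‖v‖ ^ 2) := by
        rw [h3]
        have : (∫ s in Ioc (0:ℝ) t, ‖C (T s v)‖ ^ 2) ≤ m * ‖v‖ ^ 2 :=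
          le_trans h4 (hCadm v hv)
        exact mul_le_mul_of_nonneg_left this (by positivity)
      calc t * ‖T t (C v)‖ ^ 2
          = (volume (Ioc (0:ℝ) t)).toReal • ‖T t (C v)‖ ^ 2 := by
            rw [hvol, smul_eq_mul]
        _ ≤ ∫ s in Ioc (0:ℝ) t, M ^ 2 * ‖C (T s v)‖ ^ 2 := h2
        _ ≤ M ^ 2 * (m * ‖v‖ ^ 2) := hh
    have h6 : ‖T t (C v)‖ ^ 2 ≤ (M ^ 2 * m / t) * ‖v‖ ^ 2 := by
      rw [div_mul_eq_mul_div, le_div_iff₀ ht]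
      nlinarith
    calc ‖T t (C v)‖ = Real.sqrt (‖T t (C v)‖ ^ 2) := by
          rw [Real.sqrt_sq (norm_nonneg _)]
      _ ≤ Real.sqrt ((M ^ 2 * m / t) * ‖v‖ ^ 2) := Real.sqrt_le_sqrt h6
      _ = Real.sqrt (M ^ 2 * m / t) * ‖v‖ := by
          rw [Real.sqrt_mul (by positivity), Real.sqrt_sq (norm_nonneg _)]
  -- open mapping theorem
  obtain ⟨c, hc, hcs⟩ := (T t₀).exists_preimage_norm_le hsurj
  set K₁ : ℝ := Real.sqrt (M ^ 2 * m / t₀) with hK₁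
  have hK₁0 : 0 ≤ K₁ := Real.sqrt_nonneg _
  refine ⟨K₁ * c, mul_nonneg hK₁0 hc.le, ?_⟩
  intro x hx
  -- preimage in D'
  have hx' : x ∈ (T t₀) '' (D' : Set X) := by rw [← hDeq]; exact hx
  obtain ⟨x', hx'D', hx'eq⟩ := hx'
  have hx'D : x' ∈ D := hD'D hx'D'
  -- norm-controlled preimage
  obtain ⟨y, hy, hynorm⟩ := hcs x
  set z : X := x' - y with hzdef
  have hz : T t₀ z = 0 := by
    rw [hzdef, map_sub, hx'eq, hy, sub_self]
  -- approximate z by elements of D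
  obtain ⟨d, hdD, hdlim⟩ := mem_closure_iff_seq_limit.1 (hDdense z)
  -- T t₀ (C (d n)) is Cauchy
  have hcauchy : CauchySeq (fun n => T t₀ (C (d n))) := by
    have hdc : CauchySeq d := hdlim.cauchySeq
    rw [Metric.cauchySeq_iff] at hdc ⊢
    intro ε hε
    obtain ⟨N, hN⟩ := hdc (ε / (K₁ + 1)) (by positivity)
    refine ⟨N, fun i hi j hj => ?_⟩
    have hmem : d i - d j ∈ D := D.sub_mem (hdD i) (hdD j)
    have hkk := key t₀ ht₀ _ hmem
    have e1 : T t₀ (C (d i)) - T t₀ (C (d j)) = T t₀ (C (d i - d j)) := by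
      rw [map_sub, map_sub]
    calc dist (T t₀ (C (d i))) (T t₀ (C (d j)))
        = ‖T t₀ (C (d i)) - T t₀ (C (d j))‖ := dist_eq_norm _ _
      _ = ‖T t₀ (C (d i - d j))‖ := by rw [e1]
      _ ≤ K₁ * ‖d i - d j‖ := hkk
      _ = K₁ * dist (d i) (d j) := by rw [dist_eq_norm]
      _ ≤ K₁ * (ε / (K₁ + 1)) :=
          mul_le_mul_of_nonneg_left (hN i hi j hj).le hK₁0
      _ < ε := by
          rw [mul_div_assoc']
          rw [div_lt_iff₀ (by positivity)]
          nlinarith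
  obtain ⟨w, hw⟩ := cauchySeq_tendsto_of_complete hcauchy
  -- T s w = 0 for all s > 0
  have hTw : ∀ s : ℝ, 0 < s → T s w = 0 := by
    intro s hs
    have h1 : Tendsto (fun n => T s (T t₀ (C (d n)))) atTop (𝓝 (T s w)) :=
      ((T s).continuous.tendsto w).comp hw
    have he : Tendsto (fun n => T t₀ (d n)) atTop (𝓝 0) := by
      have := ((T t₀).continuous.tendsto z).comp hdlim
      rwa [hz] at this
    have h2 : Tendsto (fun n => T s (T t₀ (C (d n)))) atTop (𝓝 0) := by
      apply squeeze_zero_norm (a := fun n => Real.sqrt (M ^ 2 * m / s) * ‖T t₀ (d n)‖)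
      · intro n
        have hmem : T t₀ (d n) ∈ D := hD t₀ ht₀.le _ (hdD n)
        have hkk := key s hs _ hmem
        rwa [hCcomm t₀ ht₀.le _ (hdD n)] at hkk
      · have : Tendsto (fun n => ‖T t₀ (d n)‖) atTop (𝓝 ‖(0:X)‖) :=
          (continuous_norm.tendsto _).comp he
        rw [norm_zero] at this
        simpa using this.const_mul (Real.sqrt (M ^ 2 * m / s))
    exact tendsto_nhds_unique h1 h2
  -- hence w = 0
  have hw0 : w = 0 := by
    have hcw : ContinuousWithinAt (fun u => T u w) (Ici (0:ℝ)) 0 :=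
      (hTcont w) 0 self_mem_Ici
    have hseq : Tendsto (fun n : ℕ => (1:ℝ) / (n + 1)) atTop (𝓝[Ici (0:ℝ)] 0) := by
      apply tendsto_nhdsWithin_of_tendsto_nhds_of_eventually_within
      · exact tendsto_one_div_add_atTop_nhds_zero_nat
      · exact Eventually.of_forall (fun n => mem_Ici.2 (by positivity))
    have hmain : Tendsto (fun n : ℕ => T ((1:ℝ) / (n + 1)) w) atTop (𝓝 (T 0 w)) :=
      hcw.tendsto.comp hseq
    have hzero : (fun n : ℕ => T ((1:ℝ) / (n + 1)) w) = fun _ => (0:X) := by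
      funext n
      exact hTw _ (by positivity)
    rw [hzero] at hmain
    have := tendsto_nhds_unique hmain tendsto_const_nhds
    rw [hT0] at this
    simpa using this
  rw [hw0] at hw
  -- final estimate
  have hineq : ∀ n, ‖C x‖ ≤ K₁ * ‖x' - d n‖ + ‖T t₀ (C (d n))‖ := by
    intro n
    have hmem : x' - d n ∈ D := D.sub_mem hx'D (hdD n)
    have hkk := key t₀ ht₀ _ hmem
    have hsplit : C x = T t₀ (C (x' - d n)) + T t₀ (C (d n)) := by
      have e0 : C x = T t₀ (C x') := by
        rw [← hx'eq, hCcomm t₀ ht₀.le x' hx'D]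
      rw [e0, map_sub, map_sub]
      abel
    calc ‖C x‖ = ‖T t₀ (C (x' - d n)) + T t₀ (C (d n))‖ := by rw [hsplit]
      _ ≤ ‖T t₀ (C (x' - d n))‖ + ‖T t₀ (C (d n))‖ := norm_add_le _ _
      _ ≤ K₁ * ‖x' - d n‖ + ‖T t₀ (C (d n))‖ := add_le_add_left hkk _
  have hlim : Tendsto (fun n => K₁ * ‖x' - d n‖ + ‖T t₀ (C (d n))‖)
      atTop (𝓝 (K₁ * ‖x' - z‖ + 0)) := by
    apply Tendsto.add
    · exact (((continuous_norm.tendsto _).comp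
        (tendsto_const_nhds.sub hdlim)).const_mul K₁)
    · have : Tendsto (fun n => ‖T t₀ (C (d n))‖) atTop (𝓝 ‖(0:X)‖) :=
        (continuous_norm.tendsto _).comp hw
      rwa [norm_zero] at this
  have hfin : ‖C x‖ ≤ K₁ * ‖x' - z‖ + 0 := ge_of_tendsto' hlim hineq
  have hxz : x' - z = y := by rw [hzdef]; abel
  rw [hxz, add_zero] at hfin
  calc ‖C x‖ ≤ K₁ * ‖y‖ := hfin
    _ ≤ K₁ * (c * ‖x‖) := mul_le_mul_of_nonneg_left hynorm hK₁0
    _ = K₁ * c * ‖x‖ := by ring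
end

section
/- Let X = ℓ²(ℕ₊; ℂ), let T(t)x = (e^{-n² t} x_n)_n and C x = (n x_n)_n on D = {x : (n x_n)_n ∈ ℓ²}. Then for every n ≥ 1, choosing t = 1/n² and the basis vector e_n (the sequence with 1 in position n and 0 elsewhere), one has C(T(t) e_n) = n e^{-1} e_n, and hence ‖C(T(t)e_n)‖ = e^{-1}/√t · ‖e_n‖. Consequently there is no function ε(t) with ε(t)·√t → 0 as t ↓ 0 such that ‖C T(t)x‖ ≤ ε(t)‖x‖ for all x ∈ D: the estimate ‖C T(t)‖ ≤ γ/√t of Theorem 2.2 cannot be improved. -/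
open Set Filter

noncomputable def exampleOutput (t : ℝ) (x : lp (fun _ : ℕ+ => ℂ) 2) : ℕ+ → ℂ :=
  fun n => (n : ℂ) * Real.exp (-(n : ℝ) ^ 2 * t) * x n

lemma aux_eq (n : ℕ+) : exampleOutput (1 / (n : ℝ) ^ 2) (lp.single 2 n 1) =
    fun m => ((n : ℂ) * Real.exp (-1)) * (lp.single 2 n (1 : ℂ) : lp (fun _ : ℕ+ => ℂ) 2) m := by
  funext m
  unfold exampleOutput
  rcases eq_or_ne m n with rfl | h
  · have hn : ((m : ℝ)) ^ 2 ≠ 0 := by positivity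
    have : -(m : ℝ) ^ 2 * (1 / (m : ℝ) ^ 2) = -1 := by field_simp
    rw [this]
  · rw [lp.single_apply_ne 2 n _ h, mul_zero, mul_zero]

lemma aux_eq' (n : ℕ+) : exampleOutput (1 / (n : ℝ) ^ 2) (lp.single 2 n 1) =
    ⇑(((n : ℂ) * Real.exp (-1)) • lp.single 2 n (1 : ℂ) : lp (fun _ : ℕ+ => ℂ) 2) := by
  rw [aux_eq]; funext m; simp

lemma aux_norm_single (n : ℕ+) : ‖(lp.single 2 n (1 : ℂ) : lp (fun _ : ℕ+ => ℂ) 2)‖ = 1 := by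
  have := lp.norm_single (p := 2) (E := fun _ : ℕ+ => ℂ) (by norm_num) n (1 : ℂ)
  simpa using this

lemma aux_norm (n : ℕ+) (h : Memℓp (exampleOutput (1 / (n : ℝ) ^ 2) (lp.single 2 n 1)) 2) :
    ‖(⟨exampleOutput (1 / (n : ℝ) ^ 2) (lp.single 2 n 1), h⟩ : lp (fun _ : ℕ+ => ℂ) 2)‖ =
      (n : ℝ) * Real.exp (-1) := by
  have he : (⟨exampleOutput (1 / (n : ℝ) ^ 2) (lp.single 2 n 1), h⟩ : lp (fun _ : ℕ+ => ℂ) 2) =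
      ((n : ℂ) * Real.exp (-1)) • lp.single 2 n (1 : ℂ) := lp.ext (aux_eq' n)
  rw [he, norm_smul, aux_norm_single, mul_one, norm_mul]
  simp [Complex.norm_real, Real.abs_exp, Complex.norm_natCast, Complex.norm_exp]

/-- (Sharpness claim of Example 2.6.) For the diagonal semigroup
`(T t x)ₙ = e^{-n²t} xₙ` on `ℓ²(ℕ₊; ℂ)` and `C` with `(C x)ₙ = n xₙ` on
`D = {x : (n xₙ)ₙ ∈ ℓ²}`: taking `t = 1/n²` and the basis vector `eₙ` one has
`C (T t eₙ) = n e^{-1} eₙ`, hence `‖C (T t eₙ)‖ = (e^{-1}/√t) ‖eₙ‖`; consequently there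
is no `ε` with `ε t * √t → 0` as `t ↓ 0` such that `‖C (T t x)‖ ≤ ε t * ‖x‖` for all
`t > 0` and `x ∈ D`: the estimate `‖C T(t)‖ ≤ γ/√t` cannot be improved. -/
theorem example_estimate_sharp :
    (∀ n : ℕ+, exampleOutput (1 / (n : ℝ) ^ 2) (lp.single 2 n 1) =
      fun m => ((n : ℂ) * Real.exp (-1)) * (lp.single 2 n (1 : ℂ) : lp (fun _ : ℕ+ => ℂ) 2) m) ∧
    (∀ n : ℕ+, ∀ h : Memℓp (exampleOutput (1 / (n : ℝ) ^ 2) (lp.single 2 n 1)) 2,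
      ‖(⟨exampleOutput (1 / (n : ℝ) ^ 2) (lp.single 2 n 1), h⟩ :
          lp (fun _ : ℕ+ => ℂ) 2)‖ =
        (Real.exp (-1) / Real.sqrt (1 / (n : ℝ) ^ 2)) * ‖(lp.single 2 n (1 : ℂ) : lp (fun _ : ℕ+ => ℂ) 2)‖) ∧
    ¬ ∃ ε : ℝ → ℝ,
        Tendsto (fun t => ε t * Real.sqrt t) (nhdsWithin 0 (Ioi (0 : ℝ))) (nhds 0) ∧
        ∀ t : ℝ, 0 < t → ∀ x : lp (fun _ : ℕ+ => ℂ) 2,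
          Memℓp (fun n : ℕ+ => (n : ℂ) * x n) 2 →
          ∀ h : Memℓp (exampleOutput t x) 2,
            ‖(⟨exampleOutput t x, h⟩ : lp (fun _ : ℕ+ => ℂ) 2)‖ ≤ ε t * ‖x‖ := by
  refine ⟨aux_eq, ?_, ?_⟩
  · intro n h
    rw [aux_norm, aux_norm_single, mul_one]
    have hn : (0 : ℝ) < (n : ℝ) := by exact_mod_cast n.pos
    rw [one_div, Real.sqrt_inv, Real.sqrt_sq hn.le]
    field_simp
  · rintro ⟨ε, htend, hbound⟩
    have key : ∀ n : ℕ+, Real.exp (-1) ≤ ε (1 / (n : ℝ) ^ 2) * Real.sqrt (1 / (n : ℝ) ^ 2) := by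
      intro n
      have hn : (0 : ℝ) < (n : ℝ) := by exact_mod_cast n.pos
      have ht : (0 : ℝ) < 1 / (n : ℝ) ^ 2 := by positivity
      have hmem : Memℓp (fun m : ℕ+ => (m : ℂ) * (lp.single 2 n (1 : ℂ) : lp (fun _ : ℕ+ => ℂ) 2) m) 2 := by
        have : (fun m : ℕ+ => (m : ℂ) * (lp.single 2 n (1 : ℂ) : lp (fun _ : ℕ+ => ℂ) 2) m) =
            ⇑(((n : ℂ)) • lp.single 2 n (1 : ℂ) : lp (fun _ : ℕ+ => ℂ) 2) := by
          funext m
          rcases eq_or_ne m n with rfl | h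
          · simp
          · simp [lp.single_apply_ne 2 n _ h, Pi.single_eq_of_ne h]
        rw [this]
        exact lp.memℓp _
      have hmem2 : Memℓp (exampleOutput (1 / (n : ℝ) ^ 2) (lp.single 2 n 1)) 2 := by
        rw [aux_eq']
        exact lp.memℓp _
      have hb := hbound (1 / (n : ℝ) ^ 2) ht (lp.single 2 n 1) hmem hmem2
      rw [aux_norm n hmem2, aux_norm_single] at hb
      rw [mul_one] at hb
      have hsq : Real.sqrt (1 / (n : ℝ) ^ 2) = ((n : ℝ))⁻¹ := by
        rw [one_div, Real.sqrt_inv, Real.sqrt_sq hn.le]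
      rw [hsq]
      calc Real.exp (-1) = ((n : ℝ) * Real.exp (-1)) * (n : ℝ)⁻¹ := by
            field_simp
        _ ≤ ε (1 / (n : ℝ) ^ 2) * (n : ℝ)⁻¹ := by
            apply mul_le_mul_of_nonneg_right hb (by positivity)
    have hseq : Tendsto (fun k : ℕ => 1 / ((k : ℝ) + 1) ^ 2) atTop (nhdsWithin 0 (Ioi (0 : ℝ))) := by
      apply tendsto_nhdsWithin_of_tendsto_nhds_of_eventually_within
      · simp only [one_div]
        apply Tendsto.inv_tendsto_atTop
        exact (tendsto_pow_atTop (by norm_num : (2:ℕ) ≠ 0)).comp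
          (tendsto_atTop_add_const_right _ 1 tendsto_natCast_atTop_atTop)
      · filter_upwards with k
        have : (0:ℝ) < (k : ℝ) + 1 := by positivity
        exact mem_Ioi.mpr (by positivity)
    have hcomp : Tendsto (fun k : ℕ => ε (1 / ((k : ℝ) + 1) ^ 2) * Real.sqrt (1 / ((k : ℝ) + 1) ^ 2))
        atTop (nhds 0) := htend.comp hseq
    have hle : Real.exp (-1) ≤ 0 := by
      refine ge_of_tendsto' hcomp fun k => ?_
      have := key ⟨k + 1, Nat.succ_pos k⟩
      simpa using this
    exact absurd hle (not_le.mpr (Real.exp_pos _))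
end
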